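/- arXiv:2011.00761 — 7 statements merged into one kernel-verified Lean document; each statement's English description precedes it below -/
import Mathlib

section
/- Let ε = (ε_0, ε_1, ε_2, ε_3, ε_4) be any bijection from ZMod 5 to {0,1,2,3,4} and let ε' = (ε_1, ε_3, ε_0, ε_2, ε_4). Then 2·(ρ_ε + ρ_{ε'}) = 4 + 6p − Σ_{0 ≤ a < b ≤ 4} g_{ab}. In particular the value ρ_ε + ρ_{ε'} does not depend on the choice of ε. -/
/-- The number of orbits on `V` of the subgroup of the symmetric group on `V`
generated by a set `S` of permutations. -/
noncomputable def numOrbits {V : Type*} [Fintype V] (S : Set (Equiv.Perm V)) : ℕ :=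
  Nat.card (MulAction.orbitRel.Quotient (Subgroup.closure S) V)

private lemma sum_zmod5 {M : Type*} [AddCommMonoid M] (f : ZMod 5 → M) :
    ∑ i : ZMod 5, f i = f 0 + f 1 + f 2 + f 3 + f 4 := by
  show ∑ i : Fin 5, f i = _
  exact Fin.sum_univ_five (f := f)

/-- Let `(π 0, …, π 4)` encode a regular 5-colored graph on a finite vertex set `V`
with `|V| = 2p`.  For any bijection `ε = (ε_0,…,ε_4) : ZMod 5 ≃ Fin 5`, letting
`ε' = (ε_1, ε_3, ε_0, ε_2, ε_4)`, one has
`2·(ρ_ε + ρ_{ε'}) = 4 + 6p − Σ_{0 ≤ a < b ≤ 4} g_{ab}`.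
In particular `ρ_ε + ρ_{ε'}` does not depend on the choice of `ε`. -/
theorem two_mul_rho_add_rho_eq
    {V : Type*} [Fintype V] [DecidableEq V]
    (π : Fin 5 → Equiv.Perm V) (p : ℕ)
    (hcard : Fintype.card V = 2 * p)
    (hinv : ∀ j, π j * π j = 1)
    (hfpf : ∀ j x, π j x ≠ x)
    (g : Fin 5 → Fin 5 → ℕ)
    (hg : ∀ a b, g a b = numOrbits {π a, π b})
    (ρ : (ZMod 5 → Fin 5) → ℚ)
    (hρ : ∀ f : ZMod 5 → Fin 5,
      2 - 2 * ρ f = (∑ i : ZMod 5, (g (f i) (f (i + 1)) : ℚ)) - 3 * (p : ℚ))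
    (ε : ZMod 5 ≃ Fin 5)
    (ε' : ZMod 5 → Fin 5) (hε' : ∀ i, ε' i = ε (2 * i + 1)) :
    2 * (ρ ⇑ε + ρ ε') = 4 + 6 * (p : ℚ) -
      ∑ q ∈ Finset.univ.filter (fun q : Fin 5 × Fin 5 => q.1 < q.2), (g q.1 q.2 : ℚ) := by
  have hsym : ∀ a b : Fin 5, (g a b : ℚ) = (g b a : ℚ) := by
    intro a b; rw [hg, hg, Set.pair_comm]
  set T : ℚ := ∑ q ∈ Finset.univ.filter (fun q : Fin 5 × Fin 5 => q.1 < q.2), (g q.1 q.2 : ℚ)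
    with hTdef
  set A : ℚ := ∑ r ∈ Finset.univ.filter (fun r : ZMod 5 × ZMod 5 => ε r.1 < ε r.2),
      (g (ε r.1) (ε r.2) : ℚ) with hAdef
  -- T equals A by reindexing along ε × ε
  have hT : T = A := by
    rw [hTdef, hAdef, Finset.sum_filter, Finset.sum_filter]
    exact (Fintype.sum_equiv (Equiv.prodCongr ε ε) _ _ (fun r => rfl)).symm
  -- the reversed sum equals A
  have hswap : (∑ r ∈ Finset.univ.filter (fun r : ZMod 5 × ZMod 5 => ε r.2 < ε r.1),
      (g (ε r.1) (ε r.2) : ℚ)) = A := by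
    rw [hAdef, Finset.sum_filter, Finset.sum_filter]
    refine Fintype.sum_equiv (Equiv.prodComm _ _) _ _ (fun r => ?_)
    dsimp
    rw [hsym]
  -- the diagonal sum
  have hdiag : (∑ r ∈ Finset.univ.filter (fun r : ZMod 5 × ZMod 5 => r.1 = r.2),
      (g (ε r.1) (ε r.2) : ℚ)) = ∑ i : ZMod 5, (g (ε i) (ε i) : ℚ) := by
    rw [Finset.sum_filter, Fintype.sum_prod_type]
    simp [Finset.sum_ite_eq]
  -- trichotomy split of the full sum
  have hall : (∑ r : ZMod 5 × ZMod 5, (g (ε r.1) (ε r.2) : ℚ))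
      = A + A + ∑ i : ZMod 5, (g (ε i) (ε i) : ℚ) := by
    have hall' : (∑ r : ZMod 5 × ZMod 5, (g (ε r.1) (ε r.2) : ℚ))
        = (∑ r ∈ Finset.univ.filter (fun r : ZMod 5 × ZMod 5 => ε r.1 < ε r.2),
            (g (ε r.1) (ε r.2) : ℚ))
        + (∑ r ∈ Finset.univ.filter (fun r : ZMod 5 × ZMod 5 => ε r.2 < ε r.1),
            (g (ε r.1) (ε r.2) : ℚ))
        + (∑ r ∈ Finset.univ.filter (fun r : ZMod 5 × ZMod 5 => r.1 = r.2),
            (g (ε r.1) (ε r.2) : ℚ)) := by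
      rw [Finset.sum_filter, Finset.sum_filter, Finset.sum_filter,
        ← Finset.sum_add_distrib, ← Finset.sum_add_distrib]
      refine (Finset.sum_congr rfl fun r _ => ?_).symm
      rcases lt_trichotomy (ε r.1) (ε r.2) with h | h | h
      · have hne : r.1 ≠ r.2 := fun e => absurd (congrArg ε e) h.ne
        simp [if_pos h, if_neg (asymm h), if_neg hne]
      · have he : r.1 = r.2 := ε.injective h
        simp [he]
      · have hne : r.1 ≠ r.2 := fun e => absurd (congrArg ε e) h.ne'
        simp [if_neg (asymm h), if_pos h, if_neg hne]
    rw [hall', hswap, ← hAdef, hdiag]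
  -- brute-force expansion
  have z1 : (0 : ZMod 5) + 1 = 1 := by decide
  have z2 : (1 : ZMod 5) + 1 = 2 := by decide
  have z3 : (2 : ZMod 5) + 1 = 3 := by decide
  have z4 : (3 : ZMod 5) + 1 = 4 := by decide
  have z5 : (4 : ZMod 5) + 1 = 0 := by decide
  have w1 : (2 : ZMod 5) * 0 + 1 = 1 := by decide
  have w2 : (2 : ZMod 5) * 1 + 1 = 3 := by decide
  have w3 : (2 : ZMod 5) * 2 + 1 = 0 := by decide
  have w4 : (2 : ZMod 5) * 3 + 1 = 2 := by decide
  have w5 : (2 : ZMod 5) * 4 + 1 = 4 := by decide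
  have hbrute : (∑ r : ZMod 5 × ZMod 5, (g (ε r.1) (ε r.2) : ℚ))
      - (∑ i : ZMod 5, (g (ε i) (ε i) : ℚ))
      = 2 * ((∑ i : ZMod 5, (g (ε i) (ε (i + 1)) : ℚ))
          + (∑ i : ZMod 5, (g (ε' i) (ε' (i + 1)) : ℚ))) := by
    simp only [hε']
    rw [Fintype.sum_prod_type]
    simp only [sum_zmod5, z1, z2, z3, z4, z5, w1, w2, w3, w4, w5]
    rw [hsym (ε 1) (ε 0), hsym (ε 2) (ε 1), hsym (ε 3) (ε 2), hsym (ε 4) (ε 3),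
      hsym (ε 0) (ε 4), hsym (ε 3) (ε 1), hsym (ε 0) (ε 3), hsym (ε 2) (ε 0),
      hsym (ε 4) (ε 2), hsym (ε 1) (ε 4)]
    ring
  have key : (∑ i : ZMod 5, (g (ε i) (ε (i + 1)) : ℚ))
      + (∑ i : ZMod 5, (g (ε' i) (ε' (i + 1)) : ℚ)) = T := by
    rw [hT]
    have := hall
    linarith [hbrute]
  have h1 := hρ ⇑ε
  have h2 := hρ ε'
  linarith [h1, h2, key]
end

section
/- Let c ∈ {0,…,d−1} and suppose the graph satisfies the path condition for c, i.e. every orbit of the subgroup generated by π_c and π_d contains exactly 0 or 2 fixed points of π_d. Then there exists a unique fixed-point-free involution π̃ of V such that π̃ agrees with π_d outside Fix(π_d) and, for every x ∈ Fix(π_d), π̃(x) is a fixed point of π_d distinct from x lying in the ⟨π_c, π_d⟩-orbit of x. Moreover Fix(π_d) is invariant under π̃, and the restriction of π̃ to Fix(π_d) is a fixed-point-free involution of Fix(π_d). -/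
/-- Let `(π 0, …, π d)` encode a `(d+1)`-colored graph with boundary on a finite
vertex set `V` (`d ≥ 2`): `π j` is a fixed-point-free involution for `j < d`, and
`π d` is an involution whose fixed points are the boundary vertices.  Let
`c ∈ {0,…,d−1}` satisfy the path condition: every orbit of `⟨π c, π d⟩` contains
exactly `0` or `2` fixed points of `π d`.  Then there is a unique fixed-point-free
involution `π̃` of `V` agreeing with `π d` outside `Fix(π d)` and mapping each
`x ∈ Fix(π d)` to a fixed point of `π d` distinct from `x` in the `⟨π c, π d⟩`-orbit
of `x`; moreover `Fix(π d)` is `π̃`-invariant and the restriction of `π̃` to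
`Fix(π d)` is a fixed-point-free involution of `Fix(π d)`. -/
theorem exists_unique_capped_involution
    {V : Type*} [Fintype V] (d : ℕ) (hd : 2 ≤ d)
    (π : Fin (d + 1) → Equiv.Perm V)
    (hinv : ∀ j, π j * π j = 1)
    (hfpf : ∀ j : Fin (d + 1), j ≠ Fin.last d → ∀ x, π j x ≠ x)
    (c : Fin (d + 1)) (hc : c ≠ Fin.last d)
    (hpath : ∀ x : V,
      (MulAction.orbit (Subgroup.closure {π c, π (Fin.last d)}) x
          ∩ {y : V | π (Fin.last d) y = y}).ncard = 0 ∨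
      (MulAction.orbit (Subgroup.closure {π c, π (Fin.last d)}) x
          ∩ {y : V | π (Fin.last d) y = y}).ncard = 2) :
    ∃! t : Equiv.Perm V,
      (t * t = 1 ∧ ∀ x, t x ≠ x) ∧
      (∀ x : V, π (Fin.last d) x ≠ x → t x = π (Fin.last d) x) ∧
      (∀ x : V, π (Fin.last d) x = x →
        π (Fin.last d) (t x) = t x ∧ t x ≠ x ∧
        t x ∈ MulAction.orbit (Subgroup.closure {π c, π (Fin.last d)}) x) := by
  classical
  set πd := π (Fin.last d) with hπd
  set G := Subgroup.closure {π c, πd} with hG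
  have h2 : ∀ x, πd (πd x) = x := by
    intro x
    have h := hinv (Fin.last d)
    have : (πd * πd) x = (1 : Equiv.Perm V) x := by rw [← hπd] at h; rw [h]
    simpa using this
  have key : ∀ x, πd x = x →
      ∃! y, πd y = y ∧ y ≠ x ∧ y ∈ MulAction.orbit G x := by
    intro x hx
    have hxS : x ∈ MulAction.orbit G x ∩ {y : V | πd y = y} :=
      ⟨MulAction.mem_orbit_self x, hx⟩
    rcases hpath x with h0 | h2c
    · exfalso
      have hempty := (Set.ncard_eq_zero (Set.toFinite _)).mp h0
      rw [hempty] at hxS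
      exact hxS
    · obtain ⟨a, b, hab, hS⟩ := Set.ncard_eq_two.mp h2c
      rw [hS] at hxS
      simp only [Set.mem_insert_iff, Set.mem_singleton_iff] at hxS
      rcases hxS with rfl | rfl
      · have hb : b ∈ MulAction.orbit G x ∩ {y : V | πd y = y} := by
          rw [hS]; exact Set.mem_insert_of_mem _ rfl
        refine ⟨b, ⟨hb.2, hab.symm, hb.1⟩, ?_⟩
        intro z ⟨hz1, hz2, hz3⟩
        have hz : z ∈ MulAction.orbit G x ∩ {y : V | πd y = y} := ⟨hz3, hz1⟩
        rw [hS] at hz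
        simp only [Set.mem_insert_iff, Set.mem_singleton_iff] at hz
        rcases hz with rfl | rfl
        · exact absurd rfl hz2
        · rfl
      · have ha : a ∈ MulAction.orbit G x ∩ {y : V | πd y = y} := by
          rw [hS]; exact Set.mem_insert _ _
        refine ⟨a, ⟨ha.2, hab, ha.1⟩, ?_⟩
        intro z ⟨hz1, hz2, hz3⟩
        have hz : z ∈ MulAction.orbit G x ∩ {y : V | πd y = y} := ⟨hz3, hz1⟩
        rw [hS] at hz
        simp only [Set.mem_insert_iff, Set.mem_singleton_iff] at hz
        rcases hz with rfl | rfl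
        · rfl
        · exact absurd rfl hz2
  set g : V → V := fun x =>
    if h : πd x = x then (key x h).choose else πd x with hgdef'
  have hgdef : ∀ x (h : πd x = x), g x = (key x h).choose := by
    intro x h; simp only [hgdef', dif_pos h]
  have hgndef : ∀ x, πd x ≠ x → g x = πd x := by
    intro x h; simp only [hgdef', dif_neg h]
  have hgfix : ∀ x (h : πd x = x),
      πd (g x) = g x ∧ g x ≠ x ∧ g x ∈ MulAction.orbit G x := by
    intro x h
    rw [hgdef x h]
    exact (key x h).choose_spec.1
  have hgne : ∀ x, g x ≠ x := by
    intro x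
    by_cases h : πd x = x
    · exact (hgfix x h).2.1
    · rw [hgndef x h]; exact fun hx => h hx
  have hginv : Function.Involutive g := by
    intro x
    by_cases h : πd x = x
    · obtain ⟨hy1, hy2, hy3⟩ := hgfix x h
      have horb : x ∈ MulAction.orbit G (g x) := by
        rw [MulAction.orbit_eq_iff.mpr hy3]
        exact MulAction.mem_orbit_self x
      have hx' := (key (g x) hy1).choose_spec.2 x ⟨h, hy2.symm, horb⟩
      rw [hgdef (g x) hy1, ← hx']
    · have hne : πd (πd x) ≠ πd x := by
        intro hc'
        exact h (πd.injective hc')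
      rw [hgndef x h, hgndef _ hne, h2]
  refine ⟨Function.Involutive.toPerm g hginv, ⟨⟨?_, ?_⟩, ?_, ?_⟩, ?_⟩
  · ext x
    simp [Function.Involutive.coe_toPerm, hginv x]
  · intro x
    simpa [Function.Involutive.coe_toPerm] using hgne x
  · intro x hx
    simpa [Function.Involutive.coe_toPerm] using hgndef x hx
  · intro x hx
    simpa [Function.Involutive.coe_toPerm] using hgfix x hx
  · intro t' ⟨⟨ht'inv, ht'ne⟩, ht'agree, ht'fix⟩
    ext x
    simp only [Function.Involutive.coe_toPerm]
    by_cases h : πd x = x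
    · obtain ⟨p1, p2, p3⟩ := ht'fix x h
      have := (key x h).choose_spec.2 (t' x) ⟨p1, p2, p3⟩
      rw [hgdef x h, this]
    · rw [ht'agree x h, hgndef x h]
end

section
/- Let c ∈ {0,…,d−1} satisfy the path condition. Then the orbits on V of the subgroup generated by π_c and the c-capped involution π̃^{(c)} coincide with the orbits of the subgroup generated by π_c and π_d; consequently g̃_{cd} = g_{cd} = ġ_{cd} + p̄, where g̃_{cd} is the number of orbits of ⟨π_c, π̃^{(c)}⟩, g_{cd} is the number of orbits of ⟨π_c, π_d⟩, ġ_{cd} is the number of orbits of ⟨π_c, π_d⟩ disjoint from Fix(π_d), and 2p̄ = |Fix(π_d)|. -/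
/-- The number of orbits on `V` of the subgroup generated by `S` that are disjoint
from a given set `F`. -/
noncomputable def numOrbitsAway {V : Type*} [Fintype V] (S : Set (Equiv.Perm V))
    (F : Set V) : ℕ :=
  Nat.card {ω : MulAction.orbitRel.Quotient (Subgroup.closure S) V // ω.orbit ∩ F = ∅}

/-- If every generator in `S` moves every point within its `⟨T⟩`-orbit, then
`⟨S⟩`-orbits are contained in `⟨T⟩`-orbits. -/
lemma orbit_mono_aux {V : Type*} (S T : Set (Equiv.Perm V))
    (h : ∀ s ∈ S, ∀ x : V, s x ∈ MulAction.orbit (Subgroup.closure T) x) :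
    ∀ x : V, MulAction.orbit (Subgroup.closure S) x
      ⊆ MulAction.orbit (Subgroup.closure T) x := by
  have key : ∀ g ∈ Subgroup.closure S, ∀ x : V,
      g x ∈ MulAction.orbit (Subgroup.closure T) x := by
    intro g hg
    refine Subgroup.closure_induction (fun s hs x => h s hs x) (fun x => ?_)
      (fun a b _ _ iha ihb x => ?_) (fun a _ iha x => ?_) hg
    · show (1 : Equiv.Perm V) x ∈ _
      simp only [Equiv.Perm.coe_one, id_eq]
      exact MulAction.mem_orbit_self x
    · show a (b x) ∈ _
      have hb : b x ∈ MulAction.orbit (Subgroup.closure T) x := ihb x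
      have := MulAction.orbit_eq_iff.mpr hb
      rw [← this]
      exact iha (b x)
    · show a⁻¹ x ∈ _
      have := iha (a⁻¹ x)
      have hx : a (a⁻¹ x) = x := a.apply_symm_apply x
      rw [hx] at this
      have heq := MulAction.orbit_eq_iff.mpr this
      rw [heq]
      exact MulAction.mem_orbit_self _
  intro x y hy
  obtain ⟨⟨g, hg⟩, rfl⟩ := hy
  exact key g hg x

/-- Let `(π 0, …, π d)` encode a `(d+1)`-colored graph with boundary on a finite
vertex set `V` (`d ≥ 2`), with `2p̄ = |Fix(π d)|`, and let `c ∈ {0,…,d−1}` satisfy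
the path condition.  Let `t = π̃^{(c)}` be the `c`-capped involution.  Then the
orbits of `⟨π c, t⟩` coincide with the orbits of `⟨π c, π d⟩`; consequently
`g̃_{cd} = g_{cd} = ġ_{cd} + p̄`, where `ġ_{cd}` counts the orbits of `⟨π c, π d⟩`
disjoint from `Fix(π d)`. -/
theorem capped_orbits_eq_and_count
    {V : Type*} [Fintype V] (d : ℕ) (hd : 2 ≤ d)
    (π : Fin (d + 1) → Equiv.Perm V)
    (hinv : ∀ j, π j * π j = 1)
    (hfpf : ∀ j : Fin (d + 1), j ≠ Fin.last d → ∀ x, π j x ≠ x)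
    (pbar : ℕ) (hpbar : Nat.card {y : V | π (Fin.last d) y = y} = 2 * pbar)
    (c : Fin (d + 1)) (hc : c ≠ Fin.last d)
    (hpath : ∀ x : V,
      (MulAction.orbit (Subgroup.closure {π c, π (Fin.last d)}) x
          ∩ {y : V | π (Fin.last d) y = y}).ncard = 0 ∨
      (MulAction.orbit (Subgroup.closure {π c, π (Fin.last d)}) x
          ∩ {y : V | π (Fin.last d) y = y}).ncard = 2)
    (t : Equiv.Perm V)
    (ht_inv : t * t = 1) (ht_fpf : ∀ x, t x ≠ x)
    (ht_out : ∀ x : V, π (Fin.last d) x ≠ x → t x = π (Fin.last d) x)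
    (ht_fix : ∀ x : V, π (Fin.last d) x = x →
      π (Fin.last d) (t x) = t x ∧ t x ≠ x ∧
      t x ∈ MulAction.orbit (Subgroup.closure {π c, π (Fin.last d)}) x) :
    (∀ x : V, MulAction.orbit (Subgroup.closure {π c, t}) x
        = MulAction.orbit (Subgroup.closure {π c, π (Fin.last d)}) x) ∧
    numOrbits {π c, t} = numOrbits {π c, π (Fin.last d)} ∧
    numOrbits {π c, π (Fin.last d)}
      = numOrbitsAway {π c, π (Fin.last d)} {y : V | π (Fin.last d) y = y} + pbar := by
  classical
  set L := π (Fin.last d) with hL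
  set F : Set V := {y : V | L y = y} with hF
  -- Part 1: orbits coincide
  have h1 : ∀ x : V, MulAction.orbit (Subgroup.closure {π c, t}) x
      ⊆ MulAction.orbit (Subgroup.closure ({π c, L} : Set (Equiv.Perm V))) x := by
    refine orbit_mono_aux _ _ ?_
    intro s hs x
    rcases hs with rfl | hs
    · exact MulAction.mem_orbit x (⟨π c, Subgroup.subset_closure (Set.mem_insert _ _)⟩ :
        Subgroup.closure ({π c, L} : Set (Equiv.Perm V)))
    · rw [Set.mem_singleton_iff] at hs; subst hs
      by_cases hx : L x = x
      · exact (ht_fix x hx).2.2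
      · rw [ht_out x hx]
        exact MulAction.mem_orbit x (⟨L, Subgroup.subset_closure
          (Set.mem_insert_iff.mpr (Or.inr rfl))⟩ :
          Subgroup.closure ({π c, L} : Set (Equiv.Perm V)))
  have h2 : ∀ x : V, MulAction.orbit (Subgroup.closure ({π c, L} : Set (Equiv.Perm V))) x
      ⊆ MulAction.orbit (Subgroup.closure {π c, t}) x := by
    refine orbit_mono_aux _ _ ?_
    intro s hs x
    rcases hs with rfl | hs
    · exact MulAction.mem_orbit x (⟨π c, Subgroup.subset_closure (Set.mem_insert _ _)⟩ :
        Subgroup.closure ({π c, t} : Set (Equiv.Perm V)))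
    · rw [Set.mem_singleton_iff] at hs; subst hs
      by_cases hx : L x = x
      · rw [show L x = x from hx]; exact MulAction.mem_orbit_self x
      · have : L x = t x := (ht_out x hx).symm
        rw [this]
        exact MulAction.mem_orbit x (⟨t, Subgroup.subset_closure
          (Set.mem_insert_iff.mpr (Or.inr rfl))⟩ :
          Subgroup.closure ({π c, t} : Set (Equiv.Perm V)))
  have horb : ∀ x : V, MulAction.orbit (Subgroup.closure {π c, t}) x
      = MulAction.orbit (Subgroup.closure ({π c, L} : Set (Equiv.Perm V))) x :=
    fun x => (h1 x).antisymm (h2 x)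
  refine ⟨horb, ?_, ?_⟩
  -- Part 2: equal number of orbits
  · unfold numOrbits
    refine Nat.card_congr (Quotient.congrRight ?_)
    intro a b
    show a ∈ MulAction.orbit (Subgroup.closure {π c, t}) b
      ↔ a ∈ MulAction.orbit (Subgroup.closure ({π c, L} : Set (Equiv.Perm V))) b
    rw [horb b]
  -- Part 3: counting
  · set G := Subgroup.closure ({π c, L} : Set (Equiv.Perm V)) with hG
    set Q := MulAction.orbitRel.Quotient G V with hQ
    haveI : Fintype Q := Fintype.ofFinite Q
    set P : Q → Prop := fun q => q.orbit ∩ F = ∅ with hP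
    -- each orbit meets F in 0 or 2 points
    have hterm : ∀ q : Q, (q.orbit ∩ F).ncard = if P q then 0 else 2 := by
      intro q
      induction q using Quotient.inductionOn' with
      | h x =>
        have horb' : MulAction.orbitRel.Quotient.orbit (Quotient.mk'' x : Q)
            = MulAction.orbit G x := MulAction.orbitRel.Quotient.orbit_mk x
        by_cases hq : P (Quotient.mk'' x : Q)
        · rw [if_pos hq]
          have hq' : MulAction.orbitRel.Quotient.orbit (Quotient.mk'' x : Q) ∩ F = ∅ := hq
          rw [hq', Set.ncard_empty]
        · rw [if_neg hq]
          rcases hpath x with h0 | h2'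
          · exfalso
            apply hq
            show MulAction.orbitRel.Quotient.orbit (Quotient.mk'' x : Q) ∩ F = ∅
            refine (Set.ncard_eq_zero (Set.toFinite _)).mp ?_
            rw [horb']; exact h0
          · show (MulAction.orbitRel.Quotient.orbit (Quotient.mk'' x : Q) ∩ F).ncard = 2
            rw [horb']; exact h2'
    -- Nat.card F = sum of intersection sizes
    have ecard : Nat.card F = ∑ q : Q, (q.orbit ∩ F).ncard := by
      have e : F ≃ Σ q : Q, ↥(q.orbit ∩ F) := by
        refine (Equiv.sigmaFiberEquiv (fun y : F => (Quotient.mk'' y.1 : Q))).symm.trans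
          (Equiv.sigmaCongrRight fun q => ?_)
        refine (Equiv.subtypeSubtypeEquivSubtypeInter (fun y : V => y ∈ F)
          (fun y : V => (Quotient.mk'' y : Q) = q)).trans
          (Equiv.subtypeEquivRight fun y => ?_)
        rw [Set.mem_inter_iff]
        constructor
        · rintro ⟨hyF, hyq⟩
          exact ⟨MulAction.orbitRel.Quotient.mem_orbit.mpr hyq, hyF⟩
        · rintro ⟨hyq, hyF⟩
          exact ⟨hyF, MulAction.orbitRel.Quotient.mem_orbit.mp hyq⟩
      rw [Nat.card_congr e]
      rw [Nat.card_eq_fintype_card, Fintype.card_sigma]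
      exact Finset.sum_congr rfl fun q _ => by
        rw [← Nat.card_coe_set_eq, Nat.card_eq_fintype_card]
    -- sum equals 2 * number of orbits meeting F
    have hsum : ∑ q : Q, (q.orbit ∩ F).ncard = 2 * Nat.card {q : Q // ¬ P q} := by
      calc ∑ q : Q, (q.orbit ∩ F).ncard
          = ∑ q : Q, if P q then 0 else 2 := Finset.sum_congr rfl fun q _ => hterm q
        _ = ∑ q : Q, if ¬ P q then 2 else 0 := Finset.sum_congr rfl fun q _ => by
              by_cases h : P q <;> simp [h]
        _ = ∑ q ∈ Finset.univ.filter (fun q => ¬ P q), 2 := (Finset.sum_filter _ _).symm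
        _ = (Finset.univ.filter (fun q => ¬ P q)).card * 2 := by
              rw [Finset.sum_const, smul_eq_mul]
        _ = 2 * Nat.card {q : Q // ¬ P q} := by
              rw [Nat.card_eq_fintype_card, Fintype.card_subtype, Nat.mul_comm]
    have hmeet : Nat.card {q : Q // ¬ P q} = pbar := by
      have : 2 * Nat.card {q : Q // ¬ P q} = 2 * pbar := by
        rw [← hsum, ← ecard]; exact hpbar
      omega
    have hsplit : Nat.card Q = Nat.card {q : Q // P q} + Nat.card {q : Q // ¬ P q} := by
      rw [← Nat.card_sum]
      exact Nat.card_congr (Equiv.sumCompl P).symm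
    show Nat.card Q = Nat.card {ω : Q // ω.orbit ∩ F = ∅} + pbar
    rw [hsplit, hmeet]
end

section
/- Let i, c ∈ {0,…,d−1} be distinct colors, each satisfying the path condition. Then the number of orbits on V of the subgroup generated by π_i and the c-capped involution π̃^{(c)} equals ġ_{id} + ∂g_{ic}, where ġ_{id} is the number of orbits of ⟨π_i, π_d⟩ disjoint from Fix(π_d) and ∂g_{ic} is the number of orbits on Fix(π_d) of the subgroup generated by the boundary involutions ∂π_i and ∂π_c. -/
open MulAction

lemma aux_closure_maps {V W : Type*} (S : Set (Equiv.Perm W)) (G' : Subgroup (Equiv.Perm V))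
    (f : W → V) (h : ∀ g ∈ S, ∀ y, f (g y) ∈ orbit G' (f y)) :
    ∀ g ∈ Subgroup.closure S, ∀ y, f (g y) ∈ orbit G' (f y) := by
  intro g hg
  induction hg using Subgroup.closure_induction with
  | mem g hgS => exact h g hgS
  | one => intro y; simpa using mem_orbit_self (f y)
  | mul a b hac hbc iha ihb =>
      intro y
      have h2 : f (a (b y)) ∈ orbit G' (f (b y)) := iha (b y)
      rw [orbit_eq_iff.2 (ihb y)] at h2
      simpa [Equiv.Perm.mul_apply] using h2
  | inv a hac iha =>
      intro y
      have h2 : f (a (a⁻¹ y)) ∈ orbit G' (f (a⁻¹ y)) := iha (a⁻¹ y)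
      rw [show a (a⁻¹ y) = y from a.apply_symm_apply y] at h2
      exact (orbit_eq_iff.2 h2) ▸ mem_orbit_self (f (a⁻¹ y))

lemma aux_closure_invar {V : Type*} (S : Set (Equiv.Perm V)) (T : Set V)
    (hT : ∀ g ∈ S, ∀ x ∈ T, g x ∈ T) (hS : ∀ g ∈ S, g * g = 1) :
    ∀ g ∈ Subgroup.closure S, ∀ x, x ∈ T ↔ g x ∈ T := by
  intro g hg
  induction hg using Subgroup.closure_induction with
  | mem g hgS =>
      intro x
      refine ⟨fun hx => hT g hgS x hx, fun hx => ?_⟩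
      have h2 := hT g hgS _ hx
      have h3 : g (g x) = x := by rw [← Equiv.Perm.mul_apply, hS g hgS]; rfl
      rwa [h3] at h2
  | one => simp
  | mul a b hac hbc iha ihb => intro x; rw [Equiv.Perm.mul_apply]; exact (ihb x).trans (iha (b x))
  | inv a hac iha =>
      intro x
      have h2 := iha (a⁻¹ x)
      rw [show a (a⁻¹ x) = x from a.apply_symm_apply x] at h2
      exact h2.symm

lemma aux_card_split {α : Type*} [Finite α] (p : α → Prop) :
    Nat.card α = Nat.card {a // p a} + Nat.card {a // ¬ p a} := by
  classical
  rw [← Nat.card_sum]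
  exact Nat.card_congr (Equiv.sumCompl p).symm

/-- Let `(π 0, …, π d)` encode a `(d+1)`-colored graph with boundary on a finite
vertex set `V` (`d ≥ 2`).  Let `i, c ∈ {0,…,d−1}` be distinct colors satisfying the
path condition, with capped involutions `t_i = π̃^{(i)}`, `t_c = π̃^{(c)}` and
boundary involutions `∂π_i`, `∂π_c` (the restrictions of `t_i`, `t_c` to
`Fix(π d)`).  Then the number of orbits of `⟨π i, t_c⟩` equals
`ġ_{id} + ∂g_{ic}`, where `ġ_{id}` counts the orbits of `⟨π i, π d⟩` disjoint from
`Fix(π d)` and `∂g_{ic}` counts the orbits on `Fix(π d)` of `⟨∂π_i, ∂π_c⟩`. -/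
theorem capped_orbit_count_eq_interior_add_boundary
    {V : Type*} [Fintype V] [DecidableEq V] (d : ℕ) (hd : 2 ≤ d)
    (π : Fin (d + 1) → Equiv.Perm V)
    (hinv : ∀ j, π j * π j = 1)
    (hfpf : ∀ j : Fin (d + 1), j ≠ Fin.last d → ∀ x, π j x ≠ x)
    (i c : Fin (d + 1)) (hi : i ≠ Fin.last d) (hc : c ≠ Fin.last d) (hic : i ≠ c)
    (hpath_i : ∀ x : V,
      (MulAction.orbit (Subgroup.closure {π i, π (Fin.last d)}) x
          ∩ {y : V | π (Fin.last d) y = y}).ncard = 0 ∨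
      (MulAction.orbit (Subgroup.closure {π i, π (Fin.last d)}) x
          ∩ {y : V | π (Fin.last d) y = y}).ncard = 2)
    (hpath_c : ∀ x : V,
      (MulAction.orbit (Subgroup.closure {π c, π (Fin.last d)}) x
          ∩ {y : V | π (Fin.last d) y = y}).ncard = 0 ∨
      (MulAction.orbit (Subgroup.closure {π c, π (Fin.last d)}) x
          ∩ {y : V | π (Fin.last d) y = y}).ncard = 2)
    (ti tc : Equiv.Perm V)
    (hti_inv : ti * ti = 1) (hti_fpf : ∀ x, ti x ≠ x)
    (hti_out : ∀ x : V, π (Fin.last d) x ≠ x → ti x = π (Fin.last d) x)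
    (hti_fix : ∀ x : V, π (Fin.last d) x = x →
      π (Fin.last d) (ti x) = ti x ∧ ti x ≠ x ∧
      ti x ∈ MulAction.orbit (Subgroup.closure {π i, π (Fin.last d)}) x)
    (htc_inv : tc * tc = 1) (htc_fpf : ∀ x, tc x ≠ x)
    (htc_out : ∀ x : V, π (Fin.last d) x ≠ x → tc x = π (Fin.last d) x)
    (htc_fix : ∀ x : V, π (Fin.last d) x = x →
      π (Fin.last d) (tc x) = tc x ∧ tc x ≠ x ∧
      tc x ∈ MulAction.orbit (Subgroup.closure {π c, π (Fin.last d)}) x)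
    (bi bc : Equiv.Perm {y : V // π (Fin.last d) y = y})
    (hbi : ∀ y : {y : V // π (Fin.last d) y = y}, (bi y : V) = ti y)
    (hbc : ∀ y : {y : V // π (Fin.last d) y = y}, (bc y : V) = tc y) :
    numOrbits {π i, tc}
      = numOrbitsAway {π i, π (Fin.last d)} {y : V | π (Fin.last d) y = y}
        + numOrbits {bi, bc} := by
  classical
  set F : Set V := {y : V | π (Fin.last d) y = y} with hFdef
  set G : Subgroup (Equiv.Perm V) := Subgroup.closure {π i, tc} with hGdef
  set H : Subgroup (Equiv.Perm V) := Subgroup.closure {π i, π (Fin.last d)} with hHdef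
  set B : Subgroup (Equiv.Perm {y : V // π (Fin.last d) y = y}) := Subgroup.closure {bi, bc}
    with hBdef
  have hGmem_i : π i ∈ G := Subgroup.subset_closure (Set.mem_insert _ _)
  have hGmem_c : tc ∈ G := Subgroup.subset_closure (Set.mem_insert_of_mem _ rfl)
  have hHmem_i : π i ∈ H := Subgroup.subset_closure (Set.mem_insert _ _)
  have hHmem_d : π (Fin.last d) ∈ H := Subgroup.subset_closure (Set.mem_insert_of_mem _ rfl)
  have hBmem_i : bi ∈ B := Subgroup.subset_closure (Set.mem_insert _ _)
  have hBmem_c : bc ∈ B := Subgroup.subset_closure (Set.mem_insert_of_mem _ rfl)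
  -- interior steps stay in G-orbits
  have hstepG : ∀ g ∈ Subgroup.closure ({π i, π (Fin.last d)} : Set (Equiv.Perm V)),
      ∀ x : V, g x ∈ orbit G x := by
    refine aux_closure_maps _ G id ?_
    intro g hg x
    rcases hg with hg | hg
    · have hg' : g = π i := hg
      rw [hg']
      exact mem_orbit x (⟨π i, hGmem_i⟩ : G)
    · have hg' : g = π (Fin.last d) := hg
      rw [hg']
      by_cases hx : π (Fin.last d) x = x
      · show π (Fin.last d) x ∈ orbit G x
        rw [hx]; exact mem_orbit_self x
      · show π (Fin.last d) x ∈ orbit G x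
        rw [← htc_out x hx]; exact mem_orbit x (⟨tc, hGmem_c⟩ : G)
  have hHsubG : ∀ x : V, orbit H x ⊆ orbit G x := by
    intro x y hy
    rcases hy with ⟨⟨g, hg⟩, rfl⟩
    exact hstepG g hg x
  -- boundary steps stay in G-orbits
  have hBstep : ∀ g ∈ B, ∀ y : {y : V // π (Fin.last d) y = y},
      ((g y : {y : V // π (Fin.last d) y = y}) : V) ∈ orbit G (y : V) := by
    refine aux_closure_maps _ G Subtype.val ?_
    intro g hg y
    rcases hg with hg | hg
    · have hg' : g = bi := hg
      rw [hg', hbi y]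
      exact hHsubG _ (hti_fix (y : V) y.2).2.2
    · have hg' : g = bc := hg
      rw [hg', hbc y]
      exact mem_orbit _ (⟨tc, hGmem_c⟩ : G)
  -- fixed points in an H-orbit of a boundary point
  have horbFix : ∀ (b : V), π (Fin.last d) b = b →
      orbit H b ∩ F = {b, ti b} := by
    intro b hb
    obtain ⟨hfix, hne, horb⟩ := hti_fix b hb
    have hsub : ({b, ti b} : Set V) ⊆ orbit H b ∩ F := by
      rintro z (rfl | rfl)
      · exact ⟨mem_orbit_self _, hb⟩
      · exact ⟨horb, hfix⟩
    have hfin : (orbit H b ∩ F).Finite := Set.toFinite _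
    have h2 : (orbit H b ∩ F).ncard = 2 := by
      rcases hpath_i b with h0 | h2
      · exfalso
        have he : orbit H b ∩ F = ∅ := (Set.ncard_eq_zero hfin).1 h0
        rw [Set.eq_empty_iff_forall_notMem] at he
        exact he b ⟨mem_orbit_self _, hb⟩
      · exact h2
    have hpair : ({b, ti b} : Set V).ncard = 2 := Set.ncard_pair (Ne.symm hne)
    exact (Set.eq_of_subset_of_ncard_le hsub (by rw [hpair, h2]) hfin).symm
  -- interior orbits agree
  have horbEq : ∀ x : V, orbit H x ∩ F = ∅ → orbit G x = orbit H x := by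
    intro x hx
    refine Set.Subset.antisymm ?_ (hHsubG x)
    have hinvar := aux_closure_invar ({π i, tc} : Set (Equiv.Perm V)) (orbit H x) ?_ ?_
    · intro y hy
      rcases hy with ⟨⟨g, hg⟩, rfl⟩
      exact (hinvar g hg x).1 (mem_orbit_self x)
    · intro g hg z hz
      rcases hg with hg | hg
      · have hg' : g = π i := hg
        rw [hg', ← orbit_eq_iff.2 hz]
        exact mem_orbit z (⟨π i, hHmem_i⟩ : H)
      · have hg' : g = tc := hg
        rw [hg']
        have hzF : π (Fin.last d) z ≠ z := by
          intro hzF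
          rw [Set.eq_empty_iff_forall_notMem] at hx
          exact hx z ⟨hz, hzF⟩
        rw [htc_out z hzF, ← orbit_eq_iff.2 hz]
        exact mem_orbit z (⟨π (Fin.last d), hHmem_d⟩ : H)
    · intro g hg
      rcases hg with hg | hg
      · have hg' : g = π i := hg
        rw [hg']; exact hinv i
      · have hg' : g = tc := hg
        rw [hg']; exact htc_inv
  -- boundary orbit description
  have horbCap : ∀ (b : V) (hb : π (Fin.last d) b = b),
      orbit G b ∩ F = Subtype.val '' (orbit B (⟨b, hb⟩ : {y : V // π (Fin.last d) y = y})) := by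
    intro b hb
    apply Set.Subset.antisymm
    · set T : Set V :=
        {z : V | ∃ β ∈ orbit B (⟨b, hb⟩ : {y : V // π (Fin.last d) y = y}),
          z ∈ orbit H (β : V)} with hTdef
      have hTstep : ∀ g ∈ ({π i, tc} : Set (Equiv.Perm V)), ∀ z ∈ T, g z ∈ T := by
        intro g hg z hzT
        rcases hg with hg | hg
        · have hg' : g = π i := hg
          rw [hg']
          obtain ⟨β, hβ, hz⟩ := hzT
          refine ⟨β, hβ, ?_⟩
          rw [← orbit_eq_iff.2 hz]
          exact mem_orbit z (⟨π i, hHmem_i⟩ : H)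
        · have hg' : g = tc := hg
          rw [hg']
          obtain ⟨β, hβ, hz⟩ := hzT
          by_cases hzF : π (Fin.last d) z = z
          · have hzz : z ∈ orbit H (β : V) ∩ F := ⟨hz, hzF⟩
            rw [horbFix (β : V) β.2] at hzz
            rcases hzz with rfl | rfl
            · refine ⟨bc β, ?_, ?_⟩
              · rw [← orbit_eq_iff.2 hβ]
                exact mem_orbit β (⟨bc, hBmem_c⟩ : B)
              · rw [hbc β]
                exact mem_orbit_self _
            · refine ⟨bc (bi β), ?_, ?_⟩
              · have h1 : bi β ∈ orbit B (⟨b, hb⟩ : {y : V // π (Fin.last d) y = y}) := by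
                  rw [← orbit_eq_iff.2 hβ]
                  exact mem_orbit β (⟨bi, hBmem_i⟩ : B)
                rw [← orbit_eq_iff.2 h1]
                exact mem_orbit (bi β) (⟨bc, hBmem_c⟩ : B)
              · have h2 : ((bc (bi β)) : V) = tc (ti (β : V)) := by rw [hbc (bi β), hbi β]
                rw [h2]
                exact mem_orbit_self _
          · rw [htc_out z hzF]
            refine ⟨β, hβ, ?_⟩
            rw [← orbit_eq_iff.2 hz]
            exact mem_orbit z (⟨π (Fin.last d), hHmem_d⟩ : H)
      have hTinv := aux_closure_invar ({π i, tc} : Set (Equiv.Perm V)) T hTstep (by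
        intro g hg
        rcases hg with hg | hg
        · have hg' : g = π i := hg
          rw [hg']; exact hinv i
        · have hg' : g = tc := hg
          rw [hg']; exact htc_inv)
      rintro z ⟨hzG, hzF⟩
      obtain ⟨⟨g, hg⟩, hgz⟩ := hzG
      have hbT : b ∈ T := ⟨⟨b, hb⟩, mem_orbit_self _, mem_orbit_self _⟩
      have hzT : z ∈ T := by
        have hgb : g b = z := hgz
        rw [← hgb]
        exact (hTinv g hg b).1 hbT
      obtain ⟨β, hβ, hzH⟩ := hzT
      have hzz : z ∈ orbit H (β : V) ∩ F := ⟨hzH, hzF⟩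
      rw [horbFix (β : V) β.2] at hzz
      rcases hzz with h | h
      · exact ⟨β, hβ, h.symm⟩
      · refine ⟨bi β, ?_, ?_⟩
        · rw [← orbit_eq_iff.2 hβ]
          exact mem_orbit β (⟨bi, hBmem_i⟩ : B)
        · rw [hbi β]; exact h.symm
    · rintro z ⟨γ, hγ, rfl⟩
      refine ⟨?_, γ.2⟩
      obtain ⟨gs, hgs⟩ := hγ
      rw [← hgs]
      exact hBstep (gs : Equiv.Perm _) gs.2 (⟨b, hb⟩ : {y : V // π (Fin.last d) y = y})
  -- counting
  unfold numOrbits numOrbitsAway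
  haveI : Finite (orbitRel.Quotient G V) := Quotient.finite _
  rw [aux_card_split (fun ω : orbitRel.Quotient G V => ω.orbit ∩ F = ∅)]
  congr 1
  · -- away orbits
    have hGout : ∀ ω : orbitRel.Quotient G V, ω.orbit ∩ F = ∅ →
        orbit G (Quotient.out ω) ∩ F = ∅ := by
      intro ω h
      conv at h => rw [← Quotient.out_eq' ω]
      exact h
    let f1 : {ω : orbitRel.Quotient G V // ω.orbit ∩ F = ∅} →
        {ω : orbitRel.Quotient H V // ω.orbit ∩ F = ∅} := fun ω =>
      ⟨Quotient.mk'' (Quotient.out ω.1), by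
        have h1 := hGout ω.1 ω.2
        have h2 : orbit H (Quotient.out ω.1) ∩ F ⊆ orbit G (Quotient.out ω.1) ∩ F :=
          Set.inter_subset_inter_left F (hHsubG _)
        rw [h1] at h2
        exact Set.subset_empty_iff.1 h2⟩
    refine Nat.card_congr (Equiv.ofBijective f1 ⟨?_, ?_⟩)
    · rintro ⟨ω, hω⟩ ⟨ω', hω'⟩ h
      have h' : (Quotient.mk'' (Quotient.out ω) : orbitRel.Quotient H V)
          = Quotient.mk'' (Quotient.out ω') := congrArg Subtype.val h
      have h2 : Quotient.out ω ∈ orbit H (Quotient.out ω') := Quotient.exact' h'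
      have h4 : (Quotient.mk'' (Quotient.out ω) : orbitRel.Quotient G V)
          = Quotient.mk'' (Quotient.out ω') := Quotient.sound' (hHsubG _ h2)
      apply Subtype.ext
      rwa [Quotient.out_eq', Quotient.out_eq'] at h4
    · rintro ⟨ω, hω⟩
      have hH : orbit H (Quotient.out ω) ∩ F = ∅ := by
        conv at hω => rw [← Quotient.out_eq' ω]
        exact hω
      have hG : orbit G (Quotient.out ω) ∩ F = ∅ := by
        rw [horbEq _ hH]; exact hH
      refine ⟨⟨Quotient.mk'' (Quotient.out ω), hG⟩, ?_⟩
      apply Subtype.ext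
      show (Quotient.mk'' (Quotient.out
        (Quotient.mk'' (Quotient.out ω) : orbitRel.Quotient G V)) : orbitRel.Quotient H V) = ω
      have h2 : Quotient.out (Quotient.mk'' (Quotient.out ω) : orbitRel.Quotient G V)
          ∈ orbit G (Quotient.out ω) :=
        Quotient.exact' (Quotient.out_eq'
          (Quotient.mk'' (Quotient.out ω) : orbitRel.Quotient G V))
      rw [horbEq _ hH] at h2
      have h3 : (Quotient.mk'' (Quotient.out
            (Quotient.mk'' (Quotient.out ω) : orbitRel.Quotient G V)) : orbitRel.Quotient H V)
          = Quotient.mk'' (Quotient.out ω) := Quotient.sound' h2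
      rw [Quotient.out_eq'] at h3
      exact h3
  · -- orbits meeting the boundary
    let f2 : orbitRel.Quotient B {y : V // π (Fin.last d) y = y} →
        {ω : orbitRel.Quotient G V // ¬ (ω.orbit ∩ F = ∅)} := fun β =>
      ⟨Quotient.mk'' ((Quotient.out β : {y : V // π (Fin.last d) y = y}) : V), by
        show ¬ (orbit G ((Quotient.out β : {y : V // π (Fin.last d) y = y}) : V) ∩ F = ∅)
        intro hemp
        rw [Set.eq_empty_iff_forall_notMem] at hemp
        exact hemp _ ⟨mem_orbit_self _, (Quotient.out β).2⟩⟩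
    refine (Nat.card_congr (Equiv.ofBijective f2 ⟨?_, ?_⟩)).symm
    · intro β β' h
      have h' : (Quotient.mk'' ((Quotient.out β : {y : V // π (Fin.last d) y = y}) : V)
            : orbitRel.Quotient G V)
          = Quotient.mk'' ((Quotient.out β' : {y : V // π (Fin.last d) y = y}) : V) :=
        congrArg Subtype.val h
      have h2 : ((Quotient.out β : {y : V // π (Fin.last d) y = y}) : V)
          ∈ orbit G ((Quotient.out β' : {y : V // π (Fin.last d) y = y}) : V) :=
        Quotient.exact' h'
      have hmem : ((Quotient.out β : {y : V // π (Fin.last d) y = y}) : V)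
          ∈ orbit G ((Quotient.out β' : {y : V // π (Fin.last d) y = y}) : V) ∩ F :=
        ⟨h2, (Quotient.out β).2⟩
      rw [horbCap ((Quotient.out β' : {y : V // π (Fin.last d) y = y}) : V)
        (Quotient.out β').2] at hmem
      obtain ⟨γ, hγ, hγeq⟩ := hmem
      have hγ2 : γ = Quotient.out β := Subtype.ext hγeq
      rw [hγ2] at hγ
      have h5 : (Quotient.mk'' (Quotient.out β)
            : orbitRel.Quotient B {y : V // π (Fin.last d) y = y})
          = Quotient.mk'' (Quotient.out β') := Quotient.sound' hγ
      rwa [Quotient.out_eq', Quotient.out_eq'] at h5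
    · rintro ⟨ω, hω⟩
      obtain ⟨x, hxo, hxF⟩ := Set.nonempty_iff_ne_empty.2 hω
      refine ⟨Quotient.mk'' (⟨x, hxF⟩ : {y : V // π (Fin.last d) y = y}), ?_⟩
      apply Subtype.ext
      show (Quotient.mk'' ((Quotient.out (Quotient.mk''
            (⟨x, hxF⟩ : {y : V // π (Fin.last d) y = y})
            : orbitRel.Quotient B {y : V // π (Fin.last d) y = y})
            : {y : V // π (Fin.last d) y = y}) : V) : orbitRel.Quotient G V) = ω
      have h1 : (Quotient.out (Quotient.mk''
            (⟨x, hxF⟩ : {y : V // π (Fin.last d) y = y})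
            : orbitRel.Quotient B {y : V // π (Fin.last d) y = y}))
          ∈ orbit B (⟨x, hxF⟩ : {y : V // π (Fin.last d) y = y}) :=
        Quotient.exact' (Quotient.out_eq'
          (Quotient.mk'' (⟨x, hxF⟩ : {y : V // π (Fin.last d) y = y})
            : orbitRel.Quotient B {y : V // π (Fin.last d) y = y}))
      obtain ⟨gs, hgs⟩ := h1
      have h2 : ((Quotient.out (Quotient.mk''
            (⟨x, hxF⟩ : {y : V // π (Fin.last d) y = y})
            : orbitRel.Quotient B {y : V // π (Fin.last d) y = y})
            : {y : V // π (Fin.last d) y = y}) : V) ∈ orbit G x := by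
        rw [← hgs]
        exact hBstep (gs : Equiv.Perm _) gs.2 (⟨x, hxF⟩ : {y : V // π (Fin.last d) y = y})
      have h3 : (Quotient.mk'' ((Quotient.out (Quotient.mk''
            (⟨x, hxF⟩ : {y : V // π (Fin.last d) y = y})
            : orbitRel.Quotient B {y : V // π (Fin.last d) y = y})
            : {y : V // π (Fin.last d) y = y}) : V) : orbitRel.Quotient G V)
          = Quotient.mk'' x := Quotient.sound' h2
      rw [orbitRel.Quotient.mem_orbit] at hxo
      exact h3.trans hxo
end

section
/- Let d ≥ 3 and let ε = (ε_0, …, ε_d) be a bijection from ZMod (d+1) to {0,…,d} with ε_d = d. Suppose the colors ε_0, ε_{d−1} and a third color c ∈ {0,…,d−1} \ {ε_0, ε_{d−1}} all satisfy the path condition, and assume the identity ∂g_{ε_0 c} + ∂g_{c ε_{d−1}} + ∂g_{ε_0 ε_{d−1}} = 2·∂g_{ε_0 ε_{d−1} c} + p̄ holds (this identity is valid whenever the boundary graph represents a closed manifold). Then ρ_ε(Γ̃^{(c)}) = ρ_ε(Γ) + ∂g_{ε_0 ε_{d−1}} − ∂g_{ε_0 ε_{d−1} c}. -/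
open MulAction Equiv

section helpers
variable {α : Type*}

lemma perm_inv_eq {u : Equiv.Perm α} (hu : u * u = 1) : u⁻¹ = u :=
  inv_eq_of_mul_eq_one_right hu

lemma two_elt_eq {S : Set α} (hS : S.ncard = 2) {x u v : α}
    (hx : x ∈ S) (hu : u ∈ S) (hv : v ∈ S) (hux : u ≠ x) (hvx : v ≠ x) : u = v := by
  obtain ⟨p, r, hpr, rfl⟩ := Set.ncard_eq_two.mp hS
  simp only [Set.mem_insert_iff, Set.mem_singleton_iff] at hx hu hv
  rcases hx with rfl | rfl <;> rcases hu with rfl | rfl <;> rcases hv with rfl | rfl <;>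
    first | rfl | (exfalso; tauto)

lemma closure_pair_mem_of_mem {u v : Equiv.Perm α} (hu : u * u = 1) (hv : v * v = 1)
    {T : Set α} (hTu : ∀ z ∈ T, u z ∈ T) (hTv : ∀ z ∈ T, v z ∈ T) :
    ∀ g ∈ Subgroup.closure {u, v}, ∀ z ∈ T, g z ∈ T := by
  intro g hg
  have : ∀ z ∈ T, g z ∈ T ∧ g⁻¹ z ∈ T := by
    induction hg using Subgroup.closure_induction with
    | mem w hw =>
        rcases hw with rfl | rfl
        · exact fun z hz => ⟨hTu z hz, by rw [perm_inv_eq hu]; exact hTu z hz⟩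
        · exact fun z hz => ⟨hTv z hz, by rw [perm_inv_eq hv]; exact hTv z hz⟩
    | one => simp
    | mul a b _ _ ha hb =>
        intro z hz
        refine ⟨?_, ?_⟩
        · have := (ha _ ((hb z hz).1)).1; simpa using this
        · have := (hb _ ((ha z hz).2)).2; simpa [mul_inv_rev] using this
    | inv a _ ha =>
        intro z hz
        exact ⟨(ha z hz).2, by simpa using (ha z hz).1⟩
  exact fun z hz => (this z hz).1

lemma orbit_subset_of_invariant {u v : Equiv.Perm α} (hu : u * u = 1) (hv : v * v = 1)
    {T : Set α} (hTu : ∀ z ∈ T, u z ∈ T) (hTv : ∀ z ∈ T, v z ∈ T)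
    {x : α} (hx : x ∈ T) : orbit (Subgroup.closure {u, v}) x ⊆ T := by
  rintro y ⟨⟨g, hg⟩, rfl⟩
  exact closure_pair_mem_of_mem hu hv hTu hTv g hg x hx

lemma gen_mem_orbit_left (u v : Equiv.Perm α) (x : α) :
    u x ∈ orbit (Subgroup.closure {u, v}) x :=
  ⟨⟨u, Subgroup.subset_closure (by simp)⟩, rfl⟩

lemma gen_mem_orbit_right (u v : Equiv.Perm α) (x : α) :
    v x ∈ orbit (Subgroup.closure {u, v}) x :=
  ⟨⟨v, Subgroup.subset_closure (by simp)⟩, rfl⟩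

lemma gen_smul_mem_orbit {u v w : Equiv.Perm α} (hw : w ∈ Subgroup.closure {u, v}) {x y : α}
    (hy : y ∈ orbit (Subgroup.closure {u, v}) x) : w y ∈ orbit (Subgroup.closure {u, v}) x := by
  rcases hy with ⟨⟨g, hg⟩, rfl⟩
  exact ⟨⟨w * g, mul_mem hw hg⟩, rfl⟩

lemma perm_apply_apply {u : Equiv.Perm α} (hu : u * u = 1) (x : α) : u (u x) = x := by
  have := congrArg (fun g : Equiv.Perm α => g x) hu
  simpa using this

lemma walk_lemma [Finite α] (s q tc : Equiv.Perm α)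
    (hs : s * s = 1) (hsf : ∀ x, s x ≠ x) (hq : q * q = 1)
    (htc_out : ∀ x : α, q x ≠ x → tc x = q x)
    {x : α} (hx : q x = x) :
    ∃ y, q y = y ∧ y ≠ x ∧ y ∈ orbit (Subgroup.closure {s, q}) x ∧
      y ∈ orbit (Subgroup.closure {s, tc}) x := by
  set a : ℕ → α := fun k => ((s * q) ^ k) (s x) with ha
  have ha0 : a 0 = s x := by simp [ha]
  have hastep : ∀ k, a (k + 1) = s (q (a k)) := by
    intro k
    simp only [ha, pow_succ']
    rfl
  have hex : ∃ k, q (a k) = a k := by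
    by_contra hcon
    push_neg at hcon
    obtain ⟨i, j, hij, hija⟩ := Finite.exists_ne_map_eq_of_infinite a
    wlog hlt : i < j generalizing i j
    · exact this j i hij.symm hija.symm (by omega)
    have hN : a (j - i) = a 0 := by
      have h1 : ((s * q) ^ i) (((s * q) ^ (j - i)) (s x)) = ((s * q) ^ i) (s x) := by
        have h0 : (s * q) ^ j = (s * q) ^ i * (s * q) ^ (j - i) := by
          rw [← pow_add]; congr 1; omega
        have h2 := hija
        simp only [ha] at h2 ⊢
        rw [h2, h0]; rfl
      have h3 := ((s * q) ^ i).injective h1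
      simpa [ha, ha0] using h3
    have hge : 1 ≤ j - i := by omega
    have h4 : a ((j - i - 1) + 1) = a 0 := by rw [show j - i - 1 + 1 = j - i by omega]; exact hN
    rw [hastep, ha0] at h4
    have h5 : q (a (j - i - 1)) = x := s.injective h4
    have h6 : a (j - i - 1) = q x := by
      have := congrArg q h5
      rwa [perm_apply_apply hq] at this
    exact hcon (j - i - 1) (by rw [h6, hx]; exact hx)
  classical
  set m := Nat.find hex with hm
  have hqam : q (a m) = a m := Nat.find_spec hex
  have hmin : ∀ k, k < m → q (a k) ≠ a k := fun k hk => Nat.find_min hex hk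
  have horbG : ∀ k, a k ∈ orbit (Subgroup.closure {s, q}) x := by
    intro k
    induction k with
    | zero => rw [ha0]; exact gen_mem_orbit_left s q x
    | succ k ih =>
        rw [hastep]
        exact gen_smul_mem_orbit (Subgroup.subset_closure (by simp))
          (gen_smul_mem_orbit (Subgroup.subset_closure (by simp)) ih)
  have horbGc : ∀ k, k ≤ m → a k ∈ orbit (Subgroup.closure {s, tc}) x := by
    intro k hk
    induction k with
    | zero => rw [ha0]; exact gen_mem_orbit_left s tc x
    | succ k ih =>
        have hk' : k < m := by omega
        have heq : q (a k) = tc (a k) := (htc_out (a k) (hmin k hk')).symm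
        rw [hastep, heq]
        exact gen_smul_mem_orbit (Subgroup.subset_closure (by simp))
          (gen_smul_mem_orbit (Subgroup.subset_closure (by simp)) (ih (by omega)))
  have hne : a m ≠ x := by
    intro hxm
    rcases Nat.eq_zero_or_pos m with hm0 | hmpos
    · rw [hm0, ha0] at hxm; exact hsf x hxm
    have back : ∀ k, k ≤ m - 1 → a (m - 1 - k) = q (a k) := by
      intro k
      induction k with
      | zero =>
          intro _
          have h1 : a ((m - 1) + 1) = x := by rw [show m - 1 + 1 = m by omega]; exact hxm
          rw [hastep] at h1
          have h2 : q (a (m - 1)) = s x := by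
            have := congrArg s h1
            rwa [perm_apply_apply hs] at this
          have h3 : a (m - 1) = q (s x) := by
            have := congrArg q h2
            rwa [perm_apply_apply hq] at this
          simpa [ha0] using h3
      | succ k ih =>
          intro hk1
          have ihk := ih (by omega)
          have hsplit : m - 1 - k = (m - 1 - (k + 1)) + 1 := by omega
          rw [hsplit, hastep] at ihk
          have h2 : q (a (m - 1 - (k + 1))) = s (q (a k)) := by
            have := congrArg s ihk
            rwa [perm_apply_apply hs] at this
          have h3 : a (m - 1 - (k + 1)) = q (s (q (a k))) := by
            have := congrArg q h2
            rwa [perm_apply_apply hq] at this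
          rw [h3, ← hastep]
    rcases Nat.even_or_odd (m - 1) with ⟨r, hr⟩ | ⟨r, hr⟩
    · have hb := back r (by omega)
      rw [show m - 1 - r = r by omega] at hb
      exact hmin r (by omega) hb.symm
    · have hb := back r (by omega)
      rw [show m - 1 - r = r + 1 by omega, hastep] at hb
      exact hsf (q (a r)) hb
  exact ⟨a m, hqam, hne, horbG m, horbGc m (le_refl m)⟩

end helpers

lemma count_lemma {V : Type*} [Fintype V] [DecidableEq V]
    (s q ts tc : Equiv.Perm V)
    (hs : s * s = 1) (hsf : ∀ x, s x ≠ x) (hq : q * q = 1)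
    (htc : tc * tc = 1)
    (hpath : ∀ x : V,
      (orbit (Subgroup.closure {s, q}) x ∩ {y : V | q y = y}).ncard = 0 ∨
      (orbit (Subgroup.closure {s, q}) x ∩ {y : V | q y = y}).ncard = 2)
    (hts_fix : ∀ x : V, q x = x → q (ts x) = ts x ∧ ts x ≠ x ∧
      ts x ∈ orbit (Subgroup.closure {s, q}) x)
    (htc_out : ∀ x : V, q x ≠ x → tc x = q x)
    (htc_fix : ∀ x : V, q x = x → q (tc x) = tc x)
    (bs bc : Equiv.Perm {y : V // q y = y})
    (hbs : ∀ y : {y : V // q y = y}, (bs y : V) = ts y)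
    (hbc : ∀ y : {y : V // q y = y}, (bc y : V) = tc y) :
    numOrbits {s, tc} = numOrbitsAway {s, q} {y : V | q y = y} + numOrbits {bs, bc} := by
  classical
  set F : Set V := {y : V | q y = y} with hF
  set G := Subgroup.closure ({s, q} : Set (Equiv.Perm V)) with hG
  set Gc := Subgroup.closure ({s, tc} : Set (Equiv.Perm V)) with hGc
  set H := Subgroup.closure ({bs, bc} : Set (Equiv.Perm {y : V // q y = y})) with hH
  -- bs, bc are involutions
  have hts2 : ∀ z : V, q z = z → ts (ts z) = z := by
    intro z hz
    obtain ⟨h1, h2, h3⟩ := hts_fix z hz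
    obtain ⟨h1', h2', h3'⟩ := hts_fix (ts z) h1
    -- the orbit of z has exactly two fixed points: z and ts z
    have hcard : (orbit G z ∩ F).ncard = 2 := by
      rcases hpath z with h | h
      · exfalso
        have hzm : z ∈ orbit G z ∩ F := ⟨mem_orbit_self z, hz⟩
        rw [Set.ncard_eq_zero (Set.toFinite _)] at h
        simp [h] at hzm
      · exact h
    have horb : orbit G (ts z) = orbit G z := orbit_eq_iff.mpr h3
    have h4 : ts (ts z) ∈ orbit G z ∩ F := ⟨horb ▸ h3', h1'⟩
    have h5 : ts z ∈ orbit G z ∩ F := ⟨h3, h1⟩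
    have h6 : z ∈ orbit G z ∩ F := ⟨mem_orbit_self z, hz⟩
    exact two_elt_eq hcard h5 h4 h6 h2' (Ne.symm h2)
  have hbs2 : bs * bs = 1 := by
    ext y
    have : ((bs (bs y) : V)) = ((y : V)) := by
      rw [hbs, hbs]; exact hts2 _ y.2
    simpa [Subtype.ext_iff] using this
  have hbc2 : bc * bc = 1 := by
    ext y
    have : ((bc (bc y) : V)) = ((y : V)) := by
      rw [hbc, hbc]; exact perm_apply_apply htc _
    simpa [Subtype.ext_iff] using this
  -- two fixed points in boundary-meeting orbits of G
  have hcard2 : ∀ z : V, q z = z → (orbit G z ∩ F).ncard = 2 := by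
    intro z hz
    rcases hpath z with h | h
    · exfalso
      have hzm : z ∈ orbit G z ∩ F := ⟨mem_orbit_self z, hz⟩
      rw [Set.ncard_eq_zero (Set.toFinite _)] at h
      simp [h] at hzm
    · exact h
  have two_pt : ∀ z : V, q z = z → ∀ w ∈ orbit G z ∩ F, w = z ∨ w = ts z := by
    intro z hz w hw
    by_cases hwz : w = z
    · exact Or.inl hwz
    · obtain ⟨h1, h2, h3⟩ := hts_fix z hz
      exact Or.inr (two_elt_eq (hcard2 z hz) ⟨mem_orbit_self z, hz⟩ hw ⟨h3, h1⟩ hwz h2)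
  -- the key property: ts z lies in the Gc-orbit of z for boundary z
  have key_ts : ∀ z : V, q z = z → ts z ∈ orbit Gc z := by
    intro z hz
    obtain ⟨y, hy1, hy2, hy3, hy4⟩ := walk_lemma s q tc hs hsf hq htc_out hz
    obtain ⟨h1, h2, h3⟩ := hts_fix z hz
    have : ts z = y :=
      two_elt_eq (hcard2 z hz) ⟨mem_orbit_self z, hz⟩ ⟨h3, h1⟩ ⟨hy3, hy1⟩ h2 hy2
    rw [this]; exact hy4
  -- orbits away from the boundary agree
  have away₁ : ∀ x : V, orbit G x ∩ F = ∅ → orbit Gc x = orbit G x := by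
    intro x hx
    have hxx : x ∈ orbit G x := mem_orbit_self x
    have hGsub : ∀ z ∈ orbit G x, z ∉ F := by
      intro z hz hzF
      have : z ∈ orbit G x ∩ F := ⟨hz, hzF⟩
      simp [hx] at this
    have h1 : orbit Gc x ⊆ orbit G x := by
      apply orbit_subset_of_invariant hs htc _ _ hxx
      · intro z hz; exact gen_smul_mem_orbit (Subgroup.subset_closure (by simp)) hz
      · intro z hz
        rw [htc_out z (hGsub z hz)]
        exact gen_smul_mem_orbit (Subgroup.subset_closure (by simp)) hz
    have h2 : orbit G x ⊆ orbit Gc x := by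
      apply orbit_subset_of_invariant hs hq _ _ (mem_orbit_self x)
      · intro z hz; exact gen_smul_mem_orbit (Subgroup.subset_closure (by simp)) hz
      · intro z hz
        rw [← htc_out z (hGsub z (h1 hz))]
        exact gen_smul_mem_orbit (Subgroup.subset_closure (by simp)) hz
    exact Set.Subset.antisymm h1 h2
  have away₂ : ∀ x : V, orbit Gc x ∩ F = ∅ → orbit Gc x = orbit G x := by
    intro x hx
    have hGcsub : ∀ z ∈ orbit Gc x, z ∉ F := by
      intro z hz hzF
      have : z ∈ orbit Gc x ∩ F := ⟨hz, hzF⟩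
      simp [hx] at this
    have h2 : orbit G x ⊆ orbit Gc x := by
      apply orbit_subset_of_invariant hs hq _ _ (mem_orbit_self x)
      · intro z hz; exact gen_smul_mem_orbit (Subgroup.subset_closure (by simp)) hz
      · intro z hz
        rw [← htc_out z (hGcsub z hz)]
        exact gen_smul_mem_orbit (Subgroup.subset_closure (by simp)) hz
    apply away₁
    rw [Set.eq_empty_iff_forall_notMem]
    intro z hz
    exact hGcsub z (h2 hz.1) hz.2
  -- boundary orbits
  have bdry : ∀ x : {y : V // q y = y},
      Subtype.val '' orbit H x = orbit Gc (x : V) ∩ F := by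
    intro x
    apply Set.Subset.antisymm
    · -- image of the H-orbit is contained in the Gc-orbit
      rintro y ⟨z, hz, rfl⟩
      refine ⟨?_, z.2⟩
      have : ∀ w ∈ orbit H x, ((w : {y : V // q y = y}) : V) ∈ orbit Gc (x : V) := by
        intro w hw
        have hT : ∀ w' : {y : V // q y = y}, (w' : V) ∈ orbit Gc (x : V) →
            ((bs w' : V) ∈ orbit Gc (x : V)) ∧ ((bc w' : V) ∈ orbit Gc (x : V)) := by
          intro w' hw'
          have horb : orbit Gc ((w' : V)) = orbit Gc (x : V) := orbit_eq_iff.mpr hw'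
          constructor
          · rw [hbs]; exact horb ▸ key_ts _ w'.2
          · rw [hbc]
            exact horb ▸ gen_mem_orbit_right s tc ((w' : V))
        have := orbit_subset_of_invariant hbs2 hbc2
          (T := {w' : {y : V // q y = y} | (w' : V) ∈ orbit Gc (x : V)})
          (fun z' hz' => (hT z' hz').1) (fun z' hz' => (hT z' hz').2)
          (Set.mem_setOf.mpr (mem_orbit_self (x : V))) hw
        exact this
      exact this z hz
    · -- the Gc-orbit ∩ F is contained in the image of the H-orbit
      set U : Set V := {y : V | ∃ z ∈ orbit H x, y ∈ orbit G (z : V)} with hU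
      have hUmem : ∀ y ∈ U, y ∈ F → ∃ z ∈ orbit H x, y = (z : V) := by
        rintro y ⟨z, hz, hyz⟩ hyF
        rcases two_pt (z : V) z.2 y ⟨hyz, hyF⟩ with h | h
        · exact ⟨z, hz, h⟩
        · refine ⟨bs z, gen_smul_mem_orbit (Subgroup.subset_closure (by simp)) hz, ?_⟩
          rw [hbs]; exact h
      have hUs : ∀ y ∈ U, s y ∈ U := by
        rintro y ⟨z, hz, hyz⟩
        exact ⟨z, hz, gen_smul_mem_orbit (Subgroup.subset_closure (by simp)) hyz⟩
      have hUtc : ∀ y ∈ U, tc y ∈ U := by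
        intro y hy
        by_cases hyF : y ∈ F
        · obtain ⟨z, hz, rfl⟩ := hUmem y hy hyF
          refine ⟨bc z, gen_smul_mem_orbit (Subgroup.subset_closure (by simp)) hz, ?_⟩
          rw [hbc]
          exact mem_orbit_self _
        · obtain ⟨z, hz, hyz⟩ := hy
          rw [htc_out y hyF]
          exact ⟨z, hz, gen_smul_mem_orbit (Subgroup.subset_closure (by simp)) hyz⟩
      have hxU : (x : V) ∈ U := ⟨x, mem_orbit_self x, mem_orbit_self _⟩
      have hsub : orbit Gc (x : V) ⊆ U := orbit_subset_of_invariant hs htc hUs hUtc hxU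
      rintro y ⟨hy1, hy2⟩
      obtain ⟨z, hz, rfl⟩ := hUmem y (hsub hy1) hy2
      exact ⟨z, hz, rfl⟩
  -- counting
  have memc : ∀ a b : V, a ∈ orbit Gc b ↔
      (Quotient.mk'' a : orbitRel.Quotient Gc V) = Quotient.mk'' b := by
    intro a b
    rw [← orbitRel.Quotient.mem_orbit, orbitRel.Quotient.orbit_mk]
  have memg : ∀ a b : V, a ∈ orbit G b ↔
      (Quotient.mk'' a : orbitRel.Quotient G V) = Quotient.mk'' b := by
    intro a b
    rw [← orbitRel.Quotient.mem_orbit, orbitRel.Quotient.orbit_mk]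
  have memh : ∀ a b : {y : V // q y = y}, a ∈ orbit H b ↔
      (Quotient.mk'' a : orbitRel.Quotient H {y : V // q y = y}) = Quotient.mk'' b := by
    intro a b
    rw [← orbitRel.Quotient.mem_orbit, orbitRel.Quotient.orbit_mk]
  have orbit_out : ∀ ω : orbitRel.Quotient Gc V, ω.orbit = orbit Gc (Quotient.out ω) :=
    fun ω => orbitRel.Quotient.orbit_eq_orbit_out ω Quotient.out_eq'
  have orbit_outG : ∀ ω : orbitRel.Quotient G V, ω.orbit = orbit G (Quotient.out ω) :=
    fun ω => orbitRel.Quotient.orbit_eq_orbit_out ω Quotient.out_eq'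
  have mkout : ∀ ω : orbitRel.Quotient Gc V, (Quotient.mk'' (Quotient.out ω) :
      orbitRel.Quotient Gc V) = ω := fun ω => Quotient.out_eq' ω
  have mkoutG : ∀ ω : orbitRel.Quotient G V, (Quotient.mk'' (Quotient.out ω) :
      orbitRel.Quotient G V) = ω := fun ω => Quotient.out_eq' ω
  have hsplit : Nat.card (orbitRel.Quotient Gc V)
      = Nat.card {ω : orbitRel.Quotient Gc V // ω.orbit ∩ F = ∅}
        + Nat.card {ω : orbitRel.Quotient Gc V // ¬ (ω.orbit ∩ F = ∅)} := by
    rw [← Nat.card_sum]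
    exact Nat.card_congr (Equiv.sumCompl _).symm
  have e₁ : {ω : orbitRel.Quotient Gc V // ω.orbit ∩ F = ∅}
      ≃ {ω : orbitRel.Quotient G V // ω.orbit ∩ F = ∅} := by
    refine Equiv.ofBijective
      (fun ω => ⟨Quotient.mk'' (Quotient.out ω.1), ?_⟩) ⟨?_, ?_⟩
    · rw [orbitRel.Quotient.orbit_mk, ← away₂ _ (by rw [← orbit_out]; exact ω.2),
        ← orbit_out]
      exact ω.2
    · rintro ⟨ω₁, h₁⟩ ⟨ω₂, h₂⟩ hq12
      simp only [Subtype.mk.injEq] at hq12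
      have h3 : Quotient.out ω₁ ∈ orbit G (Quotient.out ω₂) := (memg _ _).mpr hq12
      have h4 : Quotient.out ω₁ ∈ orbit Gc (Quotient.out ω₂) := by
        rwa [← away₂ _ (by rw [← orbit_out]; exact h₂)] at h3
      have h5 := (memc _ _).mp h4
      rw [mkout, mkout] at h5
      exact Subtype.ext h5
    · rintro ⟨ω', h'⟩
      have hGout : orbit G (Quotient.out ω') ∩ F = ∅ := by rw [← orbit_outG]; exact h'
      refine ⟨⟨Quotient.mk'' (Quotient.out ω'), ?_⟩, ?_⟩
      · rw [orbitRel.Quotient.orbit_mk, away₁ _ hGout]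
        exact hGout
      · apply Subtype.ext
        simp only
        set ω := (Quotient.mk'' (Quotient.out ω') : orbitRel.Quotient Gc V) with hw
        have h6 : Quotient.out ω ∈ orbit Gc (Quotient.out ω') := by
          rw [memc, mkout]
        have h7 : Quotient.out ω ∈ orbit G (Quotient.out ω') := by
          rwa [away₁ _ hGout] at h6
        have h8 := (memg _ _).mp h7
        rwa [mkoutG] at h8
  have e₂ : {ω : orbitRel.Quotient Gc V // ¬ (ω.orbit ∩ F = ∅)}
      ≃ orbitRel.Quotient H {y : V // q y = y} := by
    have hpick : ∀ ω : {ω : orbitRel.Quotient Gc V // ¬ (ω.orbit ∩ F = ∅)},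
        ∃ y : V, y ∈ ω.1.orbit ∩ F :=
      fun ω => Set.nonempty_iff_ne_empty.mpr ω.2
    choose pick hpick1 hpick2 using fun ω => (hpick ω)
    refine Equiv.ofBijective (fun ω => Quotient.mk'' ⟨pick ω, hpick2 ω⟩) ⟨?_, ?_⟩
    · rintro ω₁ ω₂ hq12
      have h3 : (⟨pick ω₁, hpick2 ω₁⟩ : {y : V // q y = y})
          ∈ orbit H ⟨pick ω₂, hpick2 ω₂⟩ := (memh _ _).mpr hq12
      have h4 : pick ω₁ ∈ orbit Gc (pick ω₂) := by
        have := (bdry ⟨pick ω₂, hpick2 ω₂⟩).subset ⟨_, h3, rfl⟩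
        exact this.1
      have h5 := (memc _ _).mp h4
      have h6 : (Quotient.mk'' (pick ω₁) : orbitRel.Quotient Gc V) = ω₁.1 :=
        orbitRel.Quotient.mem_orbit.mp (hpick1 ω₁)
      have h7 : (Quotient.mk'' (pick ω₂) : orbitRel.Quotient Gc V) = ω₂.1 :=
        orbitRel.Quotient.mem_orbit.mp (hpick1 ω₂)
      exact Subtype.ext (by rw [← h6, ← h7, h5])
    · intro ωh
      obtain ⟨z, hz⟩ : ∃ z : {y : V // q y = y}, Quotient.mk'' z = ωh :=
        ⟨Quotient.out ωh, Quotient.out_eq' ωh⟩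
      have hne : ¬ (orbitRel.Quotient.orbit
          (Quotient.mk'' (z : V) : orbitRel.Quotient Gc V) ∩ F = ∅) := by
        rw [orbitRel.Quotient.orbit_mk]
        intro hemp
        have : (z : V) ∈ orbit Gc (z : V) ∩ F := ⟨mem_orbit_self _, z.2⟩
        simp [hemp] at this
      refine ⟨⟨Quotient.mk'' (z : V), hne⟩, ?_⟩
      set ω : {ω : orbitRel.Quotient Gc V // ¬ (ω.orbit ∩ F = ∅)} :=
        ⟨Quotient.mk'' (z : V), hne⟩ with hw
      have h1 : pick ω ∈ orbit Gc (z : V) ∩ F := by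
        have := hpick1 ω
        rw [hw] at this
        exact ⟨by rw [← orbitRel.Quotient.orbit_mk (G := Gc) (z : V)]; exact this, hpick2 ω⟩
      have h2 : pick ω ∈ Subtype.val '' orbit H z := by rw [bdry]; exact h1
      obtain ⟨w, hw1, hw2⟩ := h2
      have h3 : (⟨pick ω, hpick2 ω⟩ : {y : V // q y = y}) = w := Subtype.ext hw2.symm
      show (Quotient.mk'' (⟨pick ω, hpick2 ω⟩ : {y : V // q y = y})
        : orbitRel.Quotient H {y : V // q y = y}) = ωh
      rw [h3, ← hz]
      exact (memh _ _).mp hw1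
  show Nat.card (orbitRel.Quotient Gc V) = _
  rw [hsplit, Nat.card_congr e₁, Nat.card_congr e₂]
  rfl

/-- Let `d ≥ 3` and let `Γ = (π 0, …, π d)` be a `(d+1)`-colored graph with boundary,
with `2p̄ = |Fix(π d)|`, `2ṗ = |V| − 2p̄`, `p = ṗ + p̄`.  Let `ε` be a bijection
`ZMod (d+1) ≃ Fin (d+1)` with `ε_d = d`, and suppose the colors `ε_0`, `ε_{d−1}` and a
third color `c ∉ {ε_0, ε_{d−1}, d}` all satisfy the path condition, and that
`∂g_{ε_0 c} + ∂g_{c ε_{d−1}} + ∂g_{ε_0 ε_{d−1}} = 2·∂g_{ε_0 ε_{d−1} c} + p̄`.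
Then `ρ_ε(Γ̃^{(c)}) = ρ_ε(Γ) + ∂g_{ε_0 ε_{d−1}} − ∂g_{ε_0 ε_{d−1} c}`. -/
theorem capped_regularGenus_of_not_mem_ends
    {V : Type*} [Fintype V] [DecidableEq V] (d : ℕ) (hd : 3 ≤ d)
    (π : Fin (d + 1) → Equiv.Perm V)
    (hinv : ∀ j, π j * π j = 1)
    (hfpf : ∀ j : Fin (d + 1), j ≠ Fin.last d → ∀ x, π j x ≠ x)
    (pbar pdot p : ℕ)
    (hpbar : Nat.card {y : V | π (Fin.last d) y = y} = 2 * pbar)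
    (hpdot : Fintype.card V = 2 * pdot + 2 * pbar)
    (hp : p = pdot + pbar)
    (ε : ZMod (d + 1) ≃ Fin (d + 1))
    (hεd : ε (d : ZMod (d + 1)) = Fin.last d)
    (c : Fin (d + 1)) (hc_ne : c ≠ Fin.last d)
    (hc0 : c ≠ ε 0) (hc1 : c ≠ ε ((d : ZMod (d + 1)) - 1))
    -- the colors `ε_0`, `ε_{d−1}` and `c` satisfy the path condition
    (hpath0 : ∀ x : V,
      (MulAction.orbit (Subgroup.closure {π (ε 0), π (Fin.last d)}) x
          ∩ {y : V | π (Fin.last d) y = y}).ncard = 0 ∨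
      (MulAction.orbit (Subgroup.closure {π (ε 0), π (Fin.last d)}) x
          ∩ {y : V | π (Fin.last d) y = y}).ncard = 2)
    (hpath1 : ∀ x : V,
      (MulAction.orbit (Subgroup.closure {π (ε ((d : ZMod (d + 1)) - 1)),
            π (Fin.last d)}) x
          ∩ {y : V | π (Fin.last d) y = y}).ncard = 0 ∨
      (MulAction.orbit (Subgroup.closure {π (ε ((d : ZMod (d + 1)) - 1)),
            π (Fin.last d)}) x
          ∩ {y : V | π (Fin.last d) y = y}).ncard = 2)
    (hpathc : ∀ x : V,
      (MulAction.orbit (Subgroup.closure {π c, π (Fin.last d)}) x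
          ∩ {y : V | π (Fin.last d) y = y}).ncard = 0 ∨
      (MulAction.orbit (Subgroup.closure {π c, π (Fin.last d)}) x
          ∩ {y : V | π (Fin.last d) y = y}).ncard = 2)
    -- the capped involutions for the colors `ε_0`, `ε_{d−1}` and `c`
    (t0 t1 tc : Equiv.Perm V)
    (ht0_inv : t0 * t0 = 1) (ht0_fpf : ∀ x, t0 x ≠ x)
    (ht0_out : ∀ x : V, π (Fin.last d) x ≠ x → t0 x = π (Fin.last d) x)
    (ht0_fix : ∀ x : V, π (Fin.last d) x = x →
      π (Fin.last d) (t0 x) = t0 x ∧ t0 x ≠ x ∧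
      t0 x ∈ MulAction.orbit (Subgroup.closure {π (ε 0), π (Fin.last d)}) x)
    (ht1_inv : t1 * t1 = 1) (ht1_fpf : ∀ x, t1 x ≠ x)
    (ht1_out : ∀ x : V, π (Fin.last d) x ≠ x → t1 x = π (Fin.last d) x)
    (ht1_fix : ∀ x : V, π (Fin.last d) x = x →
      π (Fin.last d) (t1 x) = t1 x ∧ t1 x ≠ x ∧
      t1 x ∈ MulAction.orbit (Subgroup.closure {π (ε ((d : ZMod (d + 1)) - 1)),
        π (Fin.last d)}) x)
    (htc_inv : tc * tc = 1) (htc_fpf : ∀ x, tc x ≠ x)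
    (htc_out : ∀ x : V, π (Fin.last d) x ≠ x → tc x = π (Fin.last d) x)
    (htc_fix : ∀ x : V, π (Fin.last d) x = x →
      π (Fin.last d) (tc x) = tc x ∧ tc x ≠ x ∧
      tc x ∈ MulAction.orbit (Subgroup.closure {π c, π (Fin.last d)}) x)
    -- the boundary involutions `∂π_{ε_0}`, `∂π_{ε_{d−1}}` and `∂π_c`
    (b0 b1 bc : Equiv.Perm {y : V // π (Fin.last d) y = y})
    (hb0 : ∀ y : {y : V // π (Fin.last d) y = y}, (b0 y : V) = t0 y)
    (hb1 : ∀ y : {y : V // π (Fin.last d) y = y}, (b1 y : V) = t1 y)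
    (hbc : ∀ y : {y : V // π (Fin.last d) y = y}, (bc y : V) = tc y)
    -- the identity `∂g_{ε_0 c} + ∂g_{c ε_{d−1}} + ∂g_{ε_0 ε_{d−1}}
    --   = 2·∂g_{ε_0 ε_{d−1} c} + p̄`
    (hbdry : numOrbits {b0, bc} + numOrbits {bc, b1} + numOrbits {b0, b1}
      = 2 * numOrbits {b0, b1, bc} + pbar)
    -- the capped regular graph `Γ̃^{(c)}`
    (πcap : Fin (d + 1) → Equiv.Perm V)
    (hπcap : ∀ j : Fin (d + 1), πcap j = if j = Fin.last d then tc else π j)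
    -- `ġ_{ab}`
    (gdot : Fin (d + 1) → Fin (d + 1) → ℕ)
    (hgdot_last : ∀ a : Fin (d + 1),
      gdot a (Fin.last d)
          = numOrbitsAway {π a, π (Fin.last d)} {y : V | π (Fin.last d) y = y} ∧
      gdot (Fin.last d) a
          = numOrbitsAway {π (Fin.last d), π a} {y : V | π (Fin.last d) y = y})
    (hgdot : ∀ a b : Fin (d + 1), a ≠ Fin.last d → b ≠ Fin.last d →
      gdot a b = numOrbits {π a, π b})
    -- the regular genus of `Γ` with respect to `ε`
    (ρ : ℚ)
    (hρ : 2 - 2 * ρ = (∑ i : ZMod (d + 1), (gdot (ε i) (ε (i + 1)) : ℚ))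
      + (1 - (d : ℚ)) * (pdot : ℚ) + (2 - (d : ℚ)) * (pbar : ℚ)
      + (numOrbits {b0, b1} : ℚ))
    -- the regular genus of `Γ̃^{(c)}` with respect to `ε`
    (ρcap : ℚ)
    (hρcap : 2 - 2 * ρcap
      = (∑ i : ZMod (d + 1), (numOrbits {πcap (ε i), πcap (ε (i + 1))} : ℚ))
        + (1 - (d : ℚ)) * (p : ℚ)) :
    ρcap = ρ + (numOrbits {b0, b1} : ℚ) - (numOrbits {b0, b1, bc} : ℚ) := by
  classical
  -- arithmetic facts in `ZMod (d + 1)`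
  have hd0 : (d : ZMod (d + 1)) ≠ 0 := by
    intro h
    rw [ZMod.natCast_eq_zero_iff] at h
    have := Nat.le_of_dvd (by omega) h
    omega
  have hone : (1 : ZMod (d + 1)) ≠ 0 := by
    have h1 : ((1 : ℕ) : ZMod (d + 1)) ≠ 0 := by
      intro h
      rw [ZMod.natCast_eq_zero_iff] at h
      have := Nat.le_of_dvd one_pos h
      omega
    simpa using h1
  have hdm1 : (d : ZMod (d + 1)) - 1 ≠ (d : ZMod (d + 1)) := by
    intro h
    exact hone (sub_eq_self.mp h)
  have hsucc : (d : ZMod (d + 1)) + 1 = 0 := by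
    have h1 : ((d + 1 : ℕ) : ZMod (d + 1)) = 0 := ZMod.natCast_self _
    push_cast at h1
    exact h1
  have hε_ne : ∀ i : ZMod (d + 1), i ≠ (d : ZMod (d + 1)) → ε i ≠ Fin.last d := by
    intro i hi h
    exact hi (ε.injective (by rw [h, hεd]))
  have hε0 : ε 0 ≠ Fin.last d := hε_ne 0 (fun h => hd0 h.symm)
  have hε1 : ε ((d : ZMod (d + 1)) - 1) ≠ Fin.last d := hε_ne _ hdm1
  -- the two applications of the counting lemma
  have C0 := count_lemma (π (ε 0)) (π (Fin.last d)) t0 tc (hinv _)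
      (hfpf _ hε0) (hinv _) htc_inv hpath0 ht0_fix htc_out
      (fun x hx => (htc_fix x hx).1) b0 bc hb0 hbc
  have C1 := count_lemma (π (ε ((d : ZMod (d + 1)) - 1))) (π (Fin.last d)) t1 tc (hinv _)
      (hfpf _ hε1) (hinv _) htc_inv hpath1 ht1_fix htc_out
      (fun x hx => (htc_fix x hx).1) b1 bc hb1 hbc
  have hcap_last : πcap (Fin.last d) = tc := by rw [hπcap]; simp
  have hcap_ne : ∀ j, j ≠ Fin.last d → πcap j = π j := by
    intro j hj; rw [hπcap, if_neg hj]
  -- the termwise comparison of the two cyclic sums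
  have hterm : ∀ i : ZMod (d + 1),
      (numOrbits {πcap (ε i), πcap (ε (i + 1))} : ℚ)
        = (gdot (ε i) (ε (i + 1)) : ℚ)
          + (if i = (d : ZMod (d + 1)) - 1 then (numOrbits {bc, b1} : ℚ) else 0)
          + (if i = (d : ZMod (d + 1)) then (numOrbits {b0, bc} : ℚ) else 0) := by
    intro i
    by_cases hid : i = (d : ZMod (d + 1))
    · rw [hid]
      rw [if_neg (fun h => hdm1 h.symm), if_pos rfl]
      rw [hsucc, hεd, hcap_last, hcap_ne _ hε0]
      rw [Set.pair_comm tc (π (ε 0)), C0, (hgdot_last (ε 0)).2,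
          Set.pair_comm (π (Fin.last d)) (π (ε 0))]
      push_cast
      ring
    · by_cases hid1 : i = (d : ZMod (d + 1)) - 1
      · rw [if_pos hid1, if_neg hid]
        have hi1 : i + 1 = (d : ZMod (d + 1)) := by rw [hid1]; ring
        rw [hi1, hεd, hid1, hcap_last, hcap_ne _ hε1, C1,
            (hgdot_last (ε ((d : ZMod (d + 1)) - 1))).1, Set.pair_comm b1 bc]
        push_cast
        ring
      · rw [if_neg hid1, if_neg hid]
        have h1 : ε i ≠ Fin.last d := hε_ne i hid
        have h2 : ε (i + 1) ≠ Fin.last d := by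
          apply hε_ne
          intro h
          exact hid1 (eq_sub_iff_add_eq.mpr h)
        rw [hcap_ne _ h1, hcap_ne _ h2, hgdot _ _ h1 h2]
        push_cast
        ring
  -- summing over the cycle
  have hsum : (∑ i : ZMod (d + 1), (numOrbits {πcap (ε i), πcap (ε (i + 1))} : ℚ))
      = (∑ i : ZMod (d + 1), (gdot (ε i) (ε (i + 1)) : ℚ))
        + (numOrbits {bc, b1} : ℚ) + (numOrbits {b0, bc} : ℚ) := by
    rw [Finset.sum_congr rfl (fun i _ => hterm i), Finset.sum_add_distrib,
        Finset.sum_add_distrib,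
        Finset.sum_ite_eq' Finset.univ ((d : ZMod (d + 1)) - 1)
          (fun _ => (numOrbits {bc, b1} : ℚ)),
        Finset.sum_ite_eq' Finset.univ (d : ZMod (d + 1))
          (fun _ => (numOrbits {b0, bc} : ℚ)),
        if_pos (Finset.mem_univ _), if_pos (Finset.mem_univ _)]
  -- final arithmetic
  have hb' : (numOrbits {b0, bc} : ℚ) + (numOrbits {bc, b1} : ℚ)
      + (numOrbits {b0, b1} : ℚ)
      = 2 * (numOrbits {b0, b1, bc} : ℚ) + (pbar : ℚ) := by exact_mod_cast hbdry
  have hp' : (p : ℚ) = (pdot : ℚ) + (pbar : ℚ) := by exact_mod_cast hp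
  rw [hsum, hp'] at hρcap
  linarith [hρ, hρcap, hb']
end

section
/- Let (π_0,…,π_4) encode a regular 5-colored graph on V, and let x, y ∈ V with π_j(x) = y form a 1-dipole of color j, i.e. x and y lie in distinct orbits of the subgroup generated by {π_i : i ≠ j}. Let (π'_0,…,π'_4) on V' = V \ {x,y} be obtained by cancelling the dipole: for i ≠ j, π'_i(z) = π_i(y) if π_i(z) = x, π'_i(z) = π_i(x) if π_i(z) = y, and π'_i(z) = π_i(z) otherwise, while π'_j is the restriction of π_j to V'. Then each π'_i is a fixed-point-free involution of V', and the orbit counts satisfy: g'_{ab} = g_{ab} − 1 for every pair of distinct colors a, b with j ∉ {a,b}, and g'_{ja} = g_{ja} for every color a ≠ j. -/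
private lemma even_card_invol {α : Type*} [DecidableEq α] (f : α → α) (S : Finset α)
    (hmap : ∀ u ∈ S, f u ∈ S) (hinv : ∀ u ∈ S, f (f u) = u) (hfpf : ∀ u ∈ S, f u ≠ u) :
    Even S.card := by
  induction S using Finset.strongInduction with
  | _ S ih =>
    rcases S.eq_empty_or_nonempty with rfl | ⟨a, ha⟩
    · simp
    · have hfa : f a ∈ S := hmap a ha
      have hne : f a ≠ a := hfpf a ha
      have hfaa : f (f a) = a := hinv a ha
      set S' := (S.erase a).erase (f a) with hS'
      have hmem : ∀ u, u ∈ S' ↔ u ∈ S ∧ u ≠ a ∧ u ≠ f a := by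
        intro u; simp [hS', Finset.mem_erase]; tauto
      have hsub : S' ⊂ S := by
        refine Finset.ssubset_of_subset_of_ssubset ?_ (Finset.erase_ssubset ha)
        exact Finset.erase_subset _ _
      have hmap' : ∀ u ∈ S', f u ∈ S' := by
        intro u hu
        rw [hmem] at hu ⊢
        obtain ⟨huS, hua, hufa⟩ := hu
        refine ⟨hmap u huS, ?_, ?_⟩
        · intro h; exact hufa (by rw [← h, hinv u huS])
        · intro h
          have := congrArg f h
          rw [hinv u huS, hfaa] at this
          exact hua this
      have hEven' : Even S'.card := ih S' hsub hmap'
        (fun u hu => hinv u ((hmem u).mp hu).1) (fun u hu => hfpf u ((hmem u).mp hu).1)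
      have hc1 : (S.erase a).card = S.card - 1 := Finset.card_erase_of_mem ha
      have hfa' : f a ∈ S.erase a := Finset.mem_erase.mpr ⟨hne, hfa⟩
      have hc2 : S'.card = (S.erase a).card - 1 := Finset.card_erase_of_mem hfa'
      have hpos : 0 < S.card := Finset.card_pos.mpr ⟨a, ha⟩
      have hpos2 : 0 < (S.erase a).card := Finset.card_pos.mpr ⟨f a, hfa'⟩
      obtain ⟨k, hk⟩ := hEven'
      exact ⟨k + 1, by omega⟩

private lemma connect_avoid {V : Type*} [Fintype V] [DecidableEq V] (σ τ : Equiv.Perm V)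
    (hσ2 : ∀ z, σ (σ z) = z) (hτ2 : ∀ z, τ (τ z) = z)
    (hσf : ∀ z, σ z ≠ z) (hτf : ∀ z, τ z ≠ z) (x : V) :
    Relation.ReflTransGen (fun u v => (v = σ u ∨ v = τ u) ∧ u ≠ x ∧ v ≠ x) (σ x) (τ x) := by
  classical
  by_contra hcon
  set R : V → V → Prop := fun u v => (v = σ u ∨ v = τ u) ∧ u ≠ x ∧ v ≠ x with hR
  set S : Finset V := Finset.univ.filter (fun v => Relation.ReflTransGen R (σ x) v) with hS
  have hmemS : ∀ v, v ∈ S ↔ Relation.ReflTransGen R (σ x) v := by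
    intro v; simp [hS]
  have hSx : ∀ v, Relation.ReflTransGen R (σ x) v → v ≠ x := by
    intro v hv
    induction hv with
    | refl => exact hσf x
    | tail h1 h2 => exact h2.2.2
  have hσxS : σ x ∈ S := (hmemS _).mpr .refl
  have hτmap : ∀ v ∈ S, τ v ∈ S := by
    intro v hv
    rw [hmemS] at hv
    have hvx := hSx v hv
    have hτvx : τ v ≠ x := by
      intro h
      have : v = τ x := by rw [← h, hτ2]
      exact hcon (this ▸ hv)
    rw [hmemS]
    exact hv.tail ⟨Or.inr rfl, hvx, hτvx⟩
  have hEven : Even S.card :=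
    even_card_invol τ S hτmap (fun u _ => hτ2 u) (fun u _ => hτf u)
  set S' := S.erase (σ x) with hS'
  have hσmap : ∀ v ∈ S', σ v ∈ S' := by
    intro v hv
    rw [Finset.mem_erase] at hv
    obtain ⟨hvne, hvS⟩ := hv
    have hvRT := (hmemS v).mp hvS
    have hvx := hSx v hvRT
    have h1 : σ v ≠ x := by
      intro h
      exact hvne (by rw [← h, hσ2])
    have h2 : σ v ∈ S := (hmemS _).mpr (hvRT.tail ⟨Or.inl rfl, hvx, h1⟩)
    rw [Finset.mem_erase]
    refine ⟨?_, h2⟩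
    intro h
    exact hvx (σ.injective h)
  have hEven' : Even S'.card :=
    even_card_invol σ S' hσmap (fun u _ => hσ2 u) (fun u _ => hσf u)
  have hc : S'.card = S.card - 1 := Finset.card_erase_of_mem hσxS
  have hpos : 0 < S.card := Finset.card_pos.mpr ⟨_, hσxS⟩
  obtain ⟨k, hk⟩ := hEven
  obtain ⟨m, hm⟩ := hEven'
  omega

private lemma closure_apply_eq {V : Type*} {α : Sort*} (S : Set (Equiv.Perm V)) (P : V → α)
    (h : ∀ σ ∈ S, ∀ z, P (σ z) = P z) :
    ∀ g ∈ Subgroup.closure S, ∀ z, P (g z) = P z := by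
  intro g hg
  induction hg using Subgroup.closure_induction with
  | mem σ hσ => exact h σ hσ
  | one => intro z; simp
  | mul g k hg hk ihg ihk =>
    intro z
    rw [Equiv.Perm.mul_apply, ihg, ihk]
  | inv g hg ihg =>
    intro z
    have := ihg (g⁻¹ z)
    rw [Equiv.Perm.inv_def, Equiv.apply_symm_apply] at this; exact this.symm


private lemma mk_orbit_eq {α : Type*} (G : Subgroup (Equiv.Perm α)) (g : Equiv.Perm α)
    (hg : g ∈ G) (z : α) :
    (Quotient.mk'' (g z) : MulAction.orbitRel.Quotient G α) = Quotient.mk'' z :=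
  Quotient.sound' ⟨⟨g, hg⟩, rfl⟩

private def rmap {V : Type*} [DecidableEq V] (x y u v : V)
    (hu : u ≠ x ∧ u ≠ y) (hv : v ≠ x ∧ v ≠ y) (z : V) : {z : V // z ≠ x ∧ z ≠ y} :=
  if hz1 : z = x then ⟨u, hu⟩ else if hz2 : z = y then ⟨v, hv⟩ else ⟨z, hz1, hz2⟩

private lemma rmap_x {V : Type*} [DecidableEq V] (x y u v : V) (hu) (hv) :
    rmap x y u v hu hv x = ⟨u, hu⟩ := by simp [rmap]

private lemma rmap_y {V : Type*} [DecidableEq V] (x y u v : V) (hu) (hv) (hne : y ≠ x) :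
    rmap x y u v hu hv y = ⟨v, hv⟩ := by simp [rmap, hne]

private lemma rmap_other {V : Type*} [DecidableEq V] (x y u v : V) (hu) (hv) (z : V)
    (h1 : z ≠ x) (h2 : z ≠ y) :
    rmap x y u v hu hv z = ⟨z, h1, h2⟩ := by simp [rmap, h1, h2]

private lemma count_case_ja {V : Type*} [Fintype V] [DecidableEq V]
    (ρ σ : Equiv.Perm V)
    (hρ2 : ∀ z, ρ (ρ z) = z) (hσ2 : ∀ z, σ (σ z) = z)
    (hρf : ∀ z, ρ z ≠ z) (hσf : ∀ z, σ z ≠ z)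
    (x y : V) (hxyne : x ≠ y) (hρxy : ρ x = y)
    (hσxy : σ x ≠ y) (hσyx : σ y ≠ x)
    (ρ' σ' : Equiv.Perm {z : V // z ≠ x ∧ z ≠ y})
    (hρ' : ∀ z : {z : V // z ≠ x ∧ z ≠ y}, ((ρ' z : V)) = ρ z)
    (hσ' : ∀ z : {z : V // z ≠ x ∧ z ≠ y}, ((σ' z : V)) =
      if σ (z : V) = x then σ y else if σ (z : V) = y then σ x else σ (z : V)) :
    Nat.card (MulAction.orbitRel.Quotient (Subgroup.closure {ρ', σ'}) {z : V // z ≠ x ∧ z ≠ y})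
      = Nat.card (MulAction.orbitRel.Quotient (Subgroup.closure {ρ, σ}) V) := by
  classical
  have hρyx : ρ y = x := by rw [← hρxy, hρ2]
  have hρG : ρ ∈ Subgroup.closure {ρ, σ} := Subgroup.subset_closure (by simp)
  have hσG : σ ∈ Subgroup.closure {ρ, σ} := Subgroup.subset_closure (by simp)
  have hρ'G : ρ' ∈ Subgroup.closure {ρ', σ'} := Subgroup.subset_closure (by simp)
  have hσ'G : σ' ∈ Subgroup.closure {ρ', σ'} := Subgroup.subset_closure (by simp)
  have hux : σ x ≠ x := hσf x
  have hvy : σ y ≠ y := hσf y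
  set Q' := MulAction.orbitRel.Quotient (Subgroup.closure {ρ', σ'}) {z : V // z ≠ x ∧ z ≠ y}
    with hQ'
  set Q := MulAction.orbitRel.Quotient (Subgroup.closure {ρ, σ}) V with hQ
  set P : V → Q' := fun z =>
    Quotient.mk'' (rmap x y (σ x) (σ y) ⟨hux, hσxy⟩ ⟨hσyx, hvy⟩ z) with hPdef
  -- key2 : σ' maps ⟨σ x⟩ to ⟨σ y⟩
  have key2 : σ' ⟨σ x, hux, hσxy⟩ = ⟨σ y, hσyx, hvy⟩ := by
    apply Subtype.ext
    rw [hσ']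
    simp [hσ2]
  have key2Q : (Quotient.mk'' (⟨σ x, hux, hσxy⟩ : {z : V // z ≠ x ∧ z ≠ y}) : Q')
      = Quotient.mk'' ⟨σ y, hσyx, hvy⟩ := by
    have := mk_orbit_eq _ σ' hσ'G ⟨σ x, hux, hσxy⟩
    rw [key2] at this
    exact this.symm
  have hPρ : ∀ z, P (ρ z) = P z := by
    intro z
    by_cases hz1 : z = x
    · subst hz1
      rw [hρxy]
      show Quotient.mk'' _ = Quotient.mk'' _
      rw [rmap_y _ _ _ _ _ _ (Ne.symm hxyne), rmap_x]
      exact key2Q.symm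
    · by_cases hz2 : z = y
      · subst hz2
        rw [hρyx]
        show Quotient.mk'' _ = Quotient.mk'' _
        rw [rmap_y _ _ _ _ _ _ (Ne.symm hxyne), rmap_x]
        exact key2Q
      · have h1 : ρ z ≠ x := by
          intro h
          have hzx : z = ρ x := by rw [← h, hρ2]
          exact hz2 (hzx.trans hρxy)
        have h2 : ρ z ≠ y := fun h => hz1 (ρ.injective (h.trans hρxy.symm))
        show Quotient.mk'' _ = Quotient.mk'' _
        rw [rmap_other _ _ _ _ _ _ _ h1 h2, rmap_other _ _ _ _ _ _ _ hz1 hz2]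
        have hv : ρ' ⟨z, hz1, hz2⟩ = ⟨ρ z, h1, h2⟩ := Subtype.ext (hρ' _)
        rw [← hv]
        exact mk_orbit_eq _ ρ' hρ'G _
  have hPσ : ∀ z, P (σ z) = P z := by
    intro z
    by_cases hz1 : z = x
    · subst hz1
      show Quotient.mk'' _ = Quotient.mk'' _
      rw [rmap_other _ _ _ _ _ _ _ hux hσxy, rmap_x]
    · by_cases hz2 : z = y
      · subst hz2
        show Quotient.mk'' _ = Quotient.mk'' _
        rw [rmap_other _ _ _ _ _ _ _ hσyx hvy, rmap_y _ _ _ _ _ _ (Ne.symm hxyne)]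
      · by_cases hc1 : σ z = x
        · have hzval : z = σ x := by rw [← hc1, hσ2]
          rw [hc1]
          show Quotient.mk'' _ = Quotient.mk'' _
          rw [rmap_x, rmap_other _ _ _ _ _ _ _ hz1 hz2]
          exact congrArg _ (Subtype.ext hzval.symm)
        · by_cases hc2 : σ z = y
          · have hzval : z = σ y := by rw [← hc2, hσ2]
            rw [hc2]
            show Quotient.mk'' _ = Quotient.mk'' _
            rw [rmap_y _ _ _ _ _ _ (Ne.symm hxyne), rmap_other _ _ _ _ _ _ _ hz1 hz2]
            exact congrArg _ (Subtype.ext hzval.symm)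
          · show Quotient.mk'' _ = Quotient.mk'' _
            rw [rmap_other _ _ _ _ _ _ _ hc1 hc2, rmap_other _ _ _ _ _ _ _ hz1 hz2]
            have hv : σ' ⟨z, hz1, hz2⟩ = ⟨σ z, hc1, hc2⟩ := by
              apply Subtype.ext
              rw [hσ']
              simp [hc1, hc2]
            rw [← hv]
            exact mk_orbit_eq _ σ' hσ'G _
  have hPall : ∀ g ∈ Subgroup.closure {ρ, σ}, ∀ z, P (g z) = P z := by
    refine closure_apply_eq _ P ?_
    intro s hs
    rcases hs with rfl | hs
    · exact hPρ
    · rw [Set.mem_singleton_iff] at hs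
      subst hs
      exact hPσ
  -- Φ : Q → Q'
  have hwd : ∀ z w : V, MulAction.orbitRel (Subgroup.closure {ρ, σ}) V z w → P z = P w := by
    intro z w hzw
    obtain ⟨g, hg⟩ := hzw
    rw [← show (g : Equiv.Perm V) w = z from hg]
    exact hPall g g.2 w
  set Φ : Q → Q' := Quotient.lift P hwd with hΦdef
  -- Ψ : Q' → Q
  set n : {z : V // z ≠ x ∧ z ≠ y} → Q := fun z' => Quotient.mk'' (z' : V) with hndef
  have hnρ : ∀ z', n (ρ' z') = n z' := by
    intro z'
    show Quotient.mk'' _ = Quotient.mk'' _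
    rw [hρ']
    exact mk_orbit_eq _ ρ hρG _
  have hnσ : ∀ z', n (σ' z') = n z' := by
    intro z'
    show (Quotient.mk'' ((σ' z' : V)) : Q) = Quotient.mk'' (z' : V)
    rw [hσ']
    by_cases hc1 : σ (z' : V) = x
    · rw [if_pos hc1]
      calc (Quotient.mk'' (σ y) : Q) = Quotient.mk'' y := mk_orbit_eq _ σ hσG y
        _ = Quotient.mk'' (ρ x) := by rw [hρxy]
        _ = Quotient.mk'' x := mk_orbit_eq _ ρ hρG x
        _ = Quotient.mk'' (σ (z' : V)) := by rw [hc1]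
        _ = Quotient.mk'' (z' : V) := mk_orbit_eq _ σ hσG _
    · by_cases hc2 : σ (z' : V) = y
      · rw [if_neg hc1, if_pos hc2]
        calc (Quotient.mk'' (σ x) : Q) = Quotient.mk'' x := mk_orbit_eq _ σ hσG x
          _ = Quotient.mk'' (ρ y) := by rw [hρyx]
          _ = Quotient.mk'' y := mk_orbit_eq _ ρ hρG y
          _ = Quotient.mk'' (σ (z' : V)) := by rw [hc2]
          _ = Quotient.mk'' (z' : V) := mk_orbit_eq _ σ hσG _
      · rw [if_neg hc1, if_neg hc2]
        exact mk_orbit_eq _ σ hσG _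
  have hnall : ∀ g ∈ Subgroup.closure {ρ', σ'}, ∀ z', n (g z') = n z' := by
    refine closure_apply_eq _ n ?_
    intro s hs
    rcases hs with rfl | hs
    · exact hnρ
    · rw [Set.mem_singleton_iff] at hs
      subst hs
      exact hnσ
  have hwd' : ∀ z' w' : {z : V // z ≠ x ∧ z ≠ y},
      MulAction.orbitRel (Subgroup.closure {ρ', σ'}) _ z' w' → n z' = n w' := by
    intro z' w' hzw
    obtain ⟨g, hg⟩ := hzw
    rw [← show (g : Equiv.Perm {z : V // z ≠ x ∧ z ≠ y}) w' = z' from hg]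
    exact hnall g g.2 w'
  set Ψ : Q' → Q := Quotient.lift n hwd' with hΨdef
  have hPsiP : ∀ z : V, Ψ (P z) = Quotient.mk'' z := by
    intro z
    by_cases hz1 : z = x
    · subst hz1
      show Ψ (Quotient.mk'' _) = _
      rw [rmap_x]
      exact mk_orbit_eq _ σ hσG _
    · by_cases hz2 : z = y
      · subst hz2
        show Ψ (Quotient.mk'' _) = _
        rw [rmap_y _ _ _ _ _ _ (Ne.symm hxyne)]
        exact mk_orbit_eq _ σ hσG _
      · show Ψ (Quotient.mk'' _) = _
        rw [rmap_other _ _ _ _ _ _ _ hz1 hz2]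
        rfl
  have hbij : Function.Bijective Φ := by
    constructor
    · intro q1 q2
      refine Quotient.inductionOn₂' q1 q2 ?_
      intro z w h
      have h' : P z = P w := h
      have := congrArg Ψ h'
      rw [hPsiP, hPsiP] at this
      exact this
    · intro q'
      refine Quotient.inductionOn' q' ?_
      intro z'
      refine ⟨Quotient.mk'' (z' : V), ?_⟩
      show P (z' : V) = Quotient.mk'' z'
      show Quotient.mk'' _ = Quotient.mk'' z'
      rw [rmap_other _ _ _ _ _ _ _ z'.2.1 z'.2.2]
  exact (Nat.card_eq_of_bijective Φ hbij).symm

private lemma orbit_step {α : Type*} (G : Subgroup (Equiv.Perm α)) (g : Equiv.Perm α)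
    (hg : g ∈ G) {b p : α} (h : b ∈ MulAction.orbit G p) : g b ∈ MulAction.orbit G p := by
  obtain ⟨k, hk⟩ := h
  refine ⟨⟨g, hg⟩ * k, ?_⟩
  have hk' : (k : Equiv.Perm α) p = b := hk
  show (g * (k : Equiv.Perm α)) p = g b
  rw [Equiv.Perm.mul_apply, hk']

private lemma key1_general {V : Type*} [Fintype V] [DecidableEq V]
    (σ τ : Equiv.Perm V)
    (hσ2 : ∀ z, σ (σ z) = z) (hτ2 : ∀ z, τ (τ z) = z)
    (hσf : ∀ z, σ z ≠ z) (hτf : ∀ z, τ z ≠ z)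
    (x y : V)
    (σ' τ' : Equiv.Perm {z : V // z ≠ x ∧ z ≠ y})
    (hσ' : ∀ z : {z : V // z ≠ x ∧ z ≠ y}, ((σ' z : V)) =
      if σ (z : V) = x then σ y else if σ (z : V) = y then σ x else σ (z : V))
    (hτ' : ∀ z : {z : V // z ≠ x ∧ z ≠ y}, ((τ' z : V)) =
      if τ (z : V) = x then τ y else if τ (z : V) = y then τ x else τ (z : V))
    (p q : V) (hq : q ∉ MulAction.orbit (Subgroup.closure {σ, τ}) p)
    (himp : ∀ v : V, v ≠ p → v ≠ q → v ≠ x ∧ v ≠ y)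
    (h1 : σ p ≠ x) (h2 : σ p ≠ y) (h3 : τ p ≠ x) (h4 : τ p ≠ y) :
    (Quotient.mk'' (⟨σ p, h1, h2⟩ : {z : V // z ≠ x ∧ z ≠ y}) :
      MulAction.orbitRel.Quotient (Subgroup.closure {σ', τ'}) {z : V // z ≠ x ∧ z ≠ y})
      = Quotient.mk'' ⟨τ p, h3, h4⟩ := by
  classical
  have hσG : σ ∈ Subgroup.closure {σ, τ} := Subgroup.subset_closure (by simp)
  have hτG : τ ∈ Subgroup.closure {σ, τ} := Subgroup.subset_closure (by simp)
  have hσ'G : σ' ∈ Subgroup.closure {σ', τ'} := Subgroup.subset_closure (by simp)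
  have hτ'G : τ' ∈ Subgroup.closure {σ', τ'} := Subgroup.subset_closure (by simp)
  have hrtg := connect_avoid σ τ hσ2 hτ2 hσf hτf p
  have main : ∀ v, Relation.ReflTransGen
      (fun u v => (v = σ u ∨ v = τ u) ∧ u ≠ p ∧ v ≠ p) (σ p) v →
      v ∈ MulAction.orbit (Subgroup.closure {σ, τ}) p ∧
      ∃ (a1 : v ≠ x) (a2 : v ≠ y),
        (Quotient.mk'' (⟨v, a1, a2⟩ : {z : V // z ≠ x ∧ z ≠ y}) :
          MulAction.orbitRel.Quotient (Subgroup.closure {σ', τ'}) {z : V // z ≠ x ∧ z ≠ y})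
          = Quotient.mk'' ⟨σ p, h1, h2⟩ := by
    intro v hv
    induction hv with
    | refl => exact ⟨⟨⟨σ, hσG⟩, rfl⟩, h1, h2, rfl⟩
    | @tail b c hab hbc ih =>
      obtain ⟨horb, a1, a2, heq⟩ := ih
      obtain ⟨hmove, hbp, hcp⟩ := hbc
      have hbq : b ≠ q := fun h => hq (h ▸ horb)
      have hcorb : c ∈ MulAction.orbit (Subgroup.closure {σ, τ}) p := by
        rcases hmove with hc | hc
        · rw [hc]; exact orbit_step _ σ hσG horb
        · rw [hc]; exact orbit_step _ τ hτG horb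
      have hcq : c ≠ q := fun h => hq (h ▸ hcorb)
      obtain ⟨hbx, hby⟩ := himp b hbp hbq
      obtain ⟨hcx, hcy⟩ := himp c hcp hcq
      refine ⟨hcorb, hcx, hcy, ?_⟩
      rcases hmove with hc | hc
      · have hbne1 : σ b ≠ x := by rw [← hc]; exact hcx
        have hbne2 : σ b ≠ y := by rw [← hc]; exact hcy
        have hval : σ' ⟨b, hbx, hby⟩ = ⟨c, hcx, hcy⟩ := by
          apply Subtype.ext
          rw [hσ']
          simp only [if_neg hbne1, if_neg hbne2]
          exact hc.symm
        calc (Quotient.mk'' (⟨c, hcx, hcy⟩ : {z : V // z ≠ x ∧ z ≠ y}) :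
              MulAction.orbitRel.Quotient (Subgroup.closure {σ', τ'}) _)
            = Quotient.mk'' (σ' ⟨b, hbx, hby⟩) := by rw [hval]
          _ = Quotient.mk'' ⟨b, hbx, hby⟩ := mk_orbit_eq _ σ' hσ'G _
          _ = Quotient.mk'' ⟨σ p, h1, h2⟩ := heq
      · have hbne1 : τ b ≠ x := by rw [← hc]; exact hcx
        have hbne2 : τ b ≠ y := by rw [← hc]; exact hcy
        have hval : τ' ⟨b, hbx, hby⟩ = ⟨c, hcx, hcy⟩ := by
          apply Subtype.ext
          rw [hτ']
          simp only [if_neg hbne1, if_neg hbne2]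
          exact hc.symm
        calc (Quotient.mk'' (⟨c, hcx, hcy⟩ : {z : V // z ≠ x ∧ z ≠ y}) :
              MulAction.orbitRel.Quotient (Subgroup.closure {σ', τ'}) _)
            = Quotient.mk'' (τ' ⟨b, hbx, hby⟩) := by rw [hval]
          _ = Quotient.mk'' ⟨b, hbx, hby⟩ := mk_orbit_eq _ τ' hτ'G _
          _ = Quotient.mk'' ⟨σ p, h1, h2⟩ := heq
  obtain ⟨_, a1, a2, heq⟩ := main (τ p) hrtg
  exact heq.symm

private lemma count_case_ab {V : Type*} [Fintype V] [DecidableEq V]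
    (σ τ : Equiv.Perm V)
    (hσ2 : ∀ z, σ (σ z) = z) (hτ2 : ∀ z, τ (τ z) = z)
    (hσf : ∀ z, σ z ≠ z) (hτf : ∀ z, τ z ≠ z)
    (x y : V) (hxyne : x ≠ y)
    (hnot : y ∉ MulAction.orbit (Subgroup.closure {σ, τ}) x)
    (σ' τ' : Equiv.Perm {z : V // z ≠ x ∧ z ≠ y})
    (hσ' : ∀ z : {z : V // z ≠ x ∧ z ≠ y}, ((σ' z : V)) =
      if σ (z : V) = x then σ y else if σ (z : V) = y then σ x else σ (z : V))
    (hτ' : ∀ z : {z : V // z ≠ x ∧ z ≠ y}, ((τ' z : V)) =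
      if τ (z : V) = x then τ y else if τ (z : V) = y then τ x else τ (z : V)) :
    Nat.card (MulAction.orbitRel.Quotient (Subgroup.closure {σ', τ'}) {z : V // z ≠ x ∧ z ≠ y})
      = Nat.card (MulAction.orbitRel.Quotient (Subgroup.closure {σ, τ}) V) - 1 := by
  classical
  have hσG : σ ∈ Subgroup.closure {σ, τ} := Subgroup.subset_closure (by simp)
  have hτG : τ ∈ Subgroup.closure {σ, τ} := Subgroup.subset_closure (by simp)
  have hσ'G : σ' ∈ Subgroup.closure {σ', τ'} := Subgroup.subset_closure (by simp)
  have hτ'G : τ' ∈ Subgroup.closure {σ', τ'} := Subgroup.subset_closure (by simp)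
  set Q' := MulAction.orbitRel.Quotient (Subgroup.closure {σ', τ'}) {z : V // z ≠ x ∧ z ≠ y}
    with hQ'
  set Q := MulAction.orbitRel.Quotient (Subgroup.closure {σ, τ}) V with hQ
  have hnot' : x ∉ MulAction.orbit (Subgroup.closure {σ, τ}) y := fun h =>
    hnot ((MulAction.orbitRel (Subgroup.closure {σ, τ}) V).iseqv.symm h)
  have hσxx : σ x ≠ x := hσf x
  have hσxy : σ x ≠ y := fun h => hnot (h ▸ ⟨⟨σ, hσG⟩, rfl⟩)
  have hτxx : τ x ≠ x := hτf x
  have hτxy : τ x ≠ y := fun h => hnot (h ▸ ⟨⟨τ, hτG⟩, rfl⟩)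
  have hσyx : σ y ≠ x := fun h => hnot' (h ▸ ⟨⟨σ, hσG⟩, rfl⟩)
  have hσyy : σ y ≠ y := hσf y
  have hτyx : τ y ≠ x := fun h => hnot' (h ▸ ⟨⟨τ, hτG⟩, rfl⟩)
  have hτyy : τ y ≠ y := hτf y
  -- key equalities in Q'
  have key2σ : (Quotient.mk'' (⟨σ x, hσxx, hσxy⟩ : {z : V // z ≠ x ∧ z ≠ y}) : Q')
      = Quotient.mk'' ⟨σ y, hσyx, hσyy⟩ := by
    have hval : σ' ⟨σ x, hσxx, hσxy⟩ = ⟨σ y, hσyx, hσyy⟩ := by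
      apply Subtype.ext
      rw [hσ']
      simp [hσ2]
    have := mk_orbit_eq _ σ' hσ'G ⟨σ x, hσxx, hσxy⟩
    rw [hval] at this
    exact this.symm
  have key1 : (Quotient.mk'' (⟨σ x, hσxx, hσxy⟩ : {z : V // z ≠ x ∧ z ≠ y}) : Q')
      = Quotient.mk'' ⟨τ x, hτxx, hτxy⟩ :=
    key1_general σ τ hσ2 hτ2 hσf hτf x y σ' τ' hσ' hτ' x y hnot
      (fun v hv1 hv2 => ⟨hv1, hv2⟩) hσxx hσxy hτxx hτxy
  have key1' : (Quotient.mk'' (⟨σ y, hσyx, hσyy⟩ : {z : V // z ≠ x ∧ z ≠ y}) : Q')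
      = Quotient.mk'' ⟨τ y, hτyx, hτyy⟩ :=
    key1_general σ τ hσ2 hτ2 hσf hτf x y σ' τ' hσ' hτ' y x hnot'
      (fun v hv1 hv2 => ⟨hv2, hv1⟩) hσyx hσyy hτyx hτyy
  set P : V → Q' := fun z =>
    Quotient.mk'' (rmap x y (σ x) (σ y) ⟨hσxx, hσxy⟩ ⟨hσyx, hσyy⟩ z) with hPdef
  have hPσ : ∀ z, P (σ z) = P z := by
    intro z
    by_cases hz1 : z = x
    · rw [hz1]
      show Quotient.mk'' _ = Quotient.mk'' _
      rw [rmap_other _ _ _ _ _ _ _ hσxx hσxy, rmap_x]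
    · by_cases hz2 : z = y
      · rw [hz2]
        show Quotient.mk'' _ = Quotient.mk'' _
        rw [rmap_other _ _ _ _ _ _ _ hσyx hσyy, rmap_y _ _ _ _ _ _ (Ne.symm hxyne)]
      · by_cases hc1 : σ z = x
        · have hzval : z = σ x := by rw [← hc1, hσ2]
          rw [hc1]
          show Quotient.mk'' _ = Quotient.mk'' _
          rw [rmap_x, rmap_other _ _ _ _ _ _ _ hz1 hz2]
          exact congrArg _ (Subtype.ext hzval.symm)
        · by_cases hc2 : σ z = y
          · have hzval : z = σ y := by rw [← hc2, hσ2]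
            rw [hc2]
            show Quotient.mk'' _ = Quotient.mk'' _
            rw [rmap_y _ _ _ _ _ _ (Ne.symm hxyne), rmap_other _ _ _ _ _ _ _ hz1 hz2]
            exact congrArg _ (Subtype.ext hzval.symm)
          · show Quotient.mk'' _ = Quotient.mk'' _
            rw [rmap_other _ _ _ _ _ _ _ hc1 hc2, rmap_other _ _ _ _ _ _ _ hz1 hz2]
            have hval : σ' ⟨z, hz1, hz2⟩ = ⟨σ z, hc1, hc2⟩ := by
              apply Subtype.ext
              rw [hσ']
              simp [hc1, hc2]
            rw [← hval]
            exact mk_orbit_eq _ σ' hσ'G _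
  have hPτ : ∀ z, P (τ z) = P z := by
    intro z
    by_cases hz1 : z = x
    · rw [hz1]
      show Quotient.mk'' _ = Quotient.mk'' _
      rw [rmap_other _ _ _ _ _ _ _ hτxx hτxy, rmap_x]
      exact key1.symm
    · by_cases hz2 : z = y
      · rw [hz2]
        show Quotient.mk'' _ = Quotient.mk'' _
        rw [rmap_other _ _ _ _ _ _ _ hτyx hτyy, rmap_y _ _ _ _ _ _ (Ne.symm hxyne)]
        exact key1'.symm
      · by_cases hc1 : τ z = x
        · have hzval : z = τ x := by rw [← hc1, hτ2]
          rw [hc1]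
          show Quotient.mk'' _ = Quotient.mk'' _
          rw [rmap_x, rmap_other _ _ _ _ _ _ _ hz1 hz2]
          calc (Quotient.mk'' (⟨σ x, hσxx, hσxy⟩ : {z : V // z ≠ x ∧ z ≠ y}) : Q')
              = Quotient.mk'' ⟨τ x, hτxx, hτxy⟩ := key1
            _ = Quotient.mk'' ⟨z, hz1, hz2⟩ := congrArg _ (Subtype.ext hzval.symm)
        · by_cases hc2 : τ z = y
          · have hzval : z = τ y := by rw [← hc2, hτ2]
            rw [hc2]
            show Quotient.mk'' _ = Quotient.mk'' _
            rw [rmap_y _ _ _ _ _ _ (Ne.symm hxyne), rmap_other _ _ _ _ _ _ _ hz1 hz2]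
            calc (Quotient.mk'' (⟨σ y, hσyx, hσyy⟩ : {z : V // z ≠ x ∧ z ≠ y}) : Q')
                = Quotient.mk'' ⟨τ y, hτyx, hτyy⟩ := key1'
              _ = Quotient.mk'' ⟨z, hz1, hz2⟩ := congrArg _ (Subtype.ext hzval.symm)
          · show Quotient.mk'' _ = Quotient.mk'' _
            rw [rmap_other _ _ _ _ _ _ _ hc1 hc2, rmap_other _ _ _ _ _ _ _ hz1 hz2]
            have hval : τ' ⟨z, hz1, hz2⟩ = ⟨τ z, hc1, hc2⟩ := by
              apply Subtype.ext
              rw [hτ']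
              simp [hc1, hc2]
            rw [← hval]
            exact mk_orbit_eq _ τ' hτ'G _
  have hPall : ∀ g ∈ Subgroup.closure {σ, τ}, ∀ z, P (g z) = P z := by
    refine closure_apply_eq _ P ?_
    intro s hs
    rcases hs with rfl | hs
    · exact hPσ
    · rw [Set.mem_singleton_iff] at hs
      subst hs
      exact hPτ
  have hwd : ∀ z w : V, MulAction.orbitRel (Subgroup.closure {σ, τ}) V z w → P z = P w := by
    intro z w hzw
    obtain ⟨g, hg⟩ := hzw
    rw [← show (g : Equiv.Perm V) w = z from hg]
    exact hPall g g.2 w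
  set Φ : Q → Q' := Quotient.lift P hwd with hΦdef
  -- the collapse map
  have hQne : (Quotient.mk'' x : Q) ≠ Quotient.mk'' y := fun h => hnot' (Quotient.eq''.mp h)
  set collapse : Q → Q := fun c => if c = Quotient.mk'' y then Quotient.mk'' x else c
    with hcoldef
  have hcol_y : collapse (Quotient.mk'' y) = Quotient.mk'' x := by
    show (if _ then _ else _) = _
    rw [if_pos rfl]
  have hcol_x : collapse (Quotient.mk'' x) = Quotient.mk'' x := by
    show (if _ then _ else _) = _
    rw [if_neg hQne]
  set m : {z : V // z ≠ x ∧ z ≠ y} → Q := fun z' => collapse (Quotient.mk'' (z' : V))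
    with hmdef
  have hmσ : ∀ z', m (σ' z') = m z' := by
    intro z'
    show collapse (Quotient.mk'' ((σ' z' : V))) = collapse (Quotient.mk'' (z' : V))
    rw [hσ']
    by_cases hc1 : σ (z' : V) = x
    · rw [if_pos hc1]
      have hzval : (z' : V) = σ x := σ.injective (by rw [hσ2]; exact hc1)
      calc collapse (Quotient.mk'' (σ y))
          = collapse (Quotient.mk'' y) := by rw [mk_orbit_eq _ σ hσG y]
        _ = Quotient.mk'' x := hcol_y
        _ = collapse (Quotient.mk'' x) := hcol_x.symm
        _ = collapse (Quotient.mk'' (σ x)) := by rw [mk_orbit_eq _ σ hσG x]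
        _ = collapse (Quotient.mk'' (z' : V)) := by rw [← hzval]
    · by_cases hc2 : σ (z' : V) = y
      · rw [if_neg hc1, if_pos hc2]
        have hzval : (z' : V) = σ y := σ.injective (by rw [hσ2]; exact hc2)
        calc collapse (Quotient.mk'' (σ x))
            = collapse (Quotient.mk'' x) := by rw [mk_orbit_eq _ σ hσG x]
          _ = Quotient.mk'' x := hcol_x
          _ = collapse (Quotient.mk'' y) := hcol_y.symm
          _ = collapse (Quotient.mk'' (σ y)) := by rw [mk_orbit_eq _ σ hσG y]
          _ = collapse (Quotient.mk'' (z' : V)) := by rw [← hzval]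
      · rw [if_neg hc1, if_neg hc2, mk_orbit_eq _ σ hσG]
  have hmτ : ∀ z', m (τ' z') = m z' := by
    intro z'
    show collapse (Quotient.mk'' ((τ' z' : V))) = collapse (Quotient.mk'' (z' : V))
    rw [hτ']
    by_cases hc1 : τ (z' : V) = x
    · rw [if_pos hc1]
      have hzval : (z' : V) = τ x := τ.injective (by rw [hτ2]; exact hc1)
      calc collapse (Quotient.mk'' (τ y))
          = collapse (Quotient.mk'' y) := by rw [mk_orbit_eq _ τ hτG y]
        _ = Quotient.mk'' x := hcol_y
        _ = collapse (Quotient.mk'' x) := hcol_x.symm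
        _ = collapse (Quotient.mk'' (τ x)) := by rw [mk_orbit_eq _ τ hτG x]
        _ = collapse (Quotient.mk'' (z' : V)) := by rw [← hzval]
    · by_cases hc2 : τ (z' : V) = y
      · rw [if_neg hc1, if_pos hc2]
        have hzval : (z' : V) = τ y := τ.injective (by rw [hτ2]; exact hc2)
        calc collapse (Quotient.mk'' (τ x))
            = collapse (Quotient.mk'' x) := by rw [mk_orbit_eq _ τ hτG x]
          _ = Quotient.mk'' x := hcol_x
          _ = collapse (Quotient.mk'' y) := hcol_y.symm
          _ = collapse (Quotient.mk'' (τ y)) := by rw [mk_orbit_eq _ τ hτG y]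
          _ = collapse (Quotient.mk'' (z' : V)) := by rw [← hzval]
      · rw [if_neg hc1, if_neg hc2, mk_orbit_eq _ τ hτG]
  have hmall : ∀ g ∈ Subgroup.closure {σ', τ'}, ∀ z', m (g z') = m z' := by
    refine closure_apply_eq _ m ?_
    intro s hs
    rcases hs with rfl | hs
    · exact hmσ
    · rw [Set.mem_singleton_iff] at hs
      subst hs
      exact hmτ
  have hwd' : ∀ z' w' : {z : V // z ≠ x ∧ z ≠ y},
      MulAction.orbitRel (Subgroup.closure {σ', τ'}) _ z' w' → m z' = m w' := by
    intro z' w' hzw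
    obtain ⟨g, hg⟩ := hzw
    rw [← show (g : Equiv.Perm {z : V // z ≠ x ∧ z ≠ y}) w' = z' from hg]
    exact hmall g g.2 w'
  set M : Q' → Q := Quotient.lift m hwd' with hMdef
  have hMP : ∀ z : V, M (P z) = collapse (Quotient.mk'' z) := by
    intro z
    by_cases hz1 : z = x
    · rw [hz1]
      show M (Quotient.mk'' _) = _
      rw [rmap_x]
      show collapse (Quotient.mk'' (σ x)) = collapse (Quotient.mk'' x)
      rw [mk_orbit_eq _ σ hσG x]
    · by_cases hz2 : z = y
      · rw [hz2]
        show M (Quotient.mk'' _) = _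
        rw [rmap_y _ _ _ _ _ _ (Ne.symm hxyne)]
        show collapse (Quotient.mk'' (σ y)) = collapse (Quotient.mk'' y)
        rw [mk_orbit_eq _ σ hσG y]
      · show M (Quotient.mk'' _) = _
        rw [rmap_other _ _ _ _ _ _ _ hz1 hz2]
        rfl
  have hrep : ∀ c : Q, ∃ z : V, Quotient.mk'' z = c := fun c =>
    Quotient.inductionOn' c (fun z => ⟨z, rfl⟩)
  -- the bijection between {c : Q // c ≠ ⟦y⟧} and Q'
  have hbij : Function.Bijective
      (fun c : {c : Q // c ≠ Quotient.mk'' y} => Φ c.1) := by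
    constructor
    · intro c1 c2 hh
      obtain ⟨z, hz⟩ := hrep c1.1
      obtain ⟨w, hw⟩ := hrep c2.1
      apply Subtype.ext
      rw [← hz, ← hw]
      have hPzw : P z = P w := by
        have : Φ c1.1 = Φ c2.1 := hh
        rw [← hz, ← hw] at this
        exact this
      have hcc := congrArg M hPzw
      rw [hMP, hMP] at hcc
      have hzy : (Quotient.mk'' z : Q) ≠ Quotient.mk'' y := by rw [hz]; exact c1.2
      have hwy : (Quotient.mk'' w : Q) ≠ Quotient.mk'' y := by rw [hw]; exact c2.2
      rwa [show collapse (Quotient.mk'' z) = Quotient.mk'' z from if_neg hzy,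
        show collapse (Quotient.mk'' w) = Quotient.mk'' w from if_neg hwy] at hcc
    · intro q'
      obtain ⟨z', hq'⟩ : ∃ z' : {z : V // z ≠ x ∧ z ≠ y}, Quotient.mk'' z' = q' :=
        Quotient.inductionOn' q' (fun z' => ⟨z', rfl⟩)
      have hPz : P (z' : V) = q' := by
        rw [← hq']
        show Quotient.mk'' _ = Quotient.mk'' z'
        rw [rmap_other _ _ _ _ _ _ _ z'.2.1 z'.2.2]
      by_cases hcy : (Quotient.mk'' (z' : V) : Q) = Quotient.mk'' y
      · refine ⟨⟨Quotient.mk'' x, hQne⟩, ?_⟩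
        show Φ (Quotient.mk'' x) = q'
        have hPy : P (z' : V) = P y := by
          obtain ⟨g, hg⟩ := Quotient.eq''.mp hcy
          rw [← show (g : Equiv.Perm V) y = (z' : V) from hg]
          exact hPall g g.2 y
        have hPxy : P x = P y := by
          show Quotient.mk'' _ = Quotient.mk'' _
          rw [rmap_x, rmap_y _ _ _ _ _ _ (Ne.symm hxyne)]
          exact key2σ
        show P x = q'
        rw [hPxy, ← hPy, hPz]
      · exact ⟨⟨Quotient.mk'' (z' : V), hcy⟩, hPz⟩
  have hcard1 : Nat.card {c : Q // c ≠ Quotient.mk'' y} = Nat.card Q' :=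
    Nat.card_eq_of_bijective _ hbij
  haveI : Fintype Q := Fintype.ofFinite Q
  have hcard2 : Nat.card {c : Q // c ≠ Quotient.mk'' y} = Nat.card Q - 1 := by
    rw [Nat.card_eq_fintype_card, Nat.card_eq_fintype_card]
    rw [Fintype.card_subtype_compl, Fintype.card_subtype_eq]
  rw [← hcard1, hcard2]


/-- Let `(π 0, …, π 4)` encode a regular 5-colored graph on `V`, and let
`x, y ∈ V` with `π j x = y` form a 1-dipole of color `j` (i.e. `x` and `y` lie in
distinct orbits of the subgroup generated by `{π i : i ≠ j}`).  Let
`(π' 0, …, π' 4)` on `V' = V \ {x, y}` be obtained by cancelling the dipole.  Then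
each `π' i` is a fixed-point-free involution of `V'`, and the orbit counts satisfy
`g'_{ab} = g_{ab} − 1` whenever `j ∉ {a, b}` and `g'_{ja} = g_{ja}` for `a ≠ j`. -/
theorem dipole_cancellation_orbit_counts
    {V : Type*} [Fintype V] [DecidableEq V]
    (π : Fin 5 → Equiv.Perm V)
    (hinv : ∀ j, π j * π j = 1)
    (hfpf : ∀ j x, π j x ≠ x)
    (j : Fin 5) (x y : V) (hxy : π j x = y)
    (hdip : y ∉ MulAction.orbit
      (Subgroup.closure (π '' {i : Fin 5 | i ≠ j})) x)
    (π' : Fin 5 → Equiv.Perm {z : V // z ≠ x ∧ z ≠ y})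
    (hπ'j : ∀ z : {z : V // z ≠ x ∧ z ≠ y}, ((π' j) z : V) = π j z)
    (hπ' : ∀ i : Fin 5, i ≠ j → ∀ z : {z : V // z ≠ x ∧ z ≠ y},
      ((π' i) z : V) = if π i z = x then π i y else if π i z = y then π i x
        else π i z) :
    (∀ i, π' i * π' i = 1 ∧ ∀ z, π' i z ≠ z) ∧
    (∀ a b : Fin 5, a ≠ b → a ≠ j → b ≠ j →
      numOrbits {π' a, π' b} = numOrbits {π a, π b} - 1) ∧
    (∀ a : Fin 5, a ≠ j →
      numOrbits {π' j, π' a} = numOrbits {π j, π a}) := by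
  have hinv2 : ∀ i z, π i (π i z) = z := by
    intro i z
    rw [← Equiv.Perm.mul_apply, hinv i, Equiv.Perm.one_apply]
  have hxyne : x ≠ y := fun h => hfpf j x (hxy.trans h.symm)
  have hmem : ∀ a : Fin 5, a ≠ j → π a ∈ Subgroup.closure (π '' {i : Fin 5 | i ≠ j}) :=
    fun a ha => Subgroup.subset_closure ⟨a, ha, rfl⟩
  have hax : ∀ a : Fin 5, a ≠ j → π a x ≠ y :=
    fun a ha h => hdip (h ▸ ⟨⟨π a, hmem a ha⟩, rfl⟩)
  have hay : ∀ a : Fin 5, a ≠ j → π a y ≠ x := by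
    intro a ha h
    exact hax a ha (by rw [← h, hinv2])
  refine ⟨?_, ?_, ?_⟩
  · -- involution and fixed-point-free properties
    intro i
    by_cases hi : i = j
    · subst hi
      constructor
      · apply Equiv.ext
        intro z
        rw [Equiv.Perm.mul_apply, Equiv.Perm.one_apply]
        apply Subtype.ext
        show ((π' i) ((π' i) z) : V) = (z : V)
        rw [hπ'j, hπ'j, hinv2]
      · intro z h
        have hval := congrArg Subtype.val h
        rw [hπ'j] at hval
        exact hfpf i (z : V) hval
    · constructor
      · apply Equiv.ext
        intro z
        rw [Equiv.Perm.mul_apply, Equiv.Perm.one_apply]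
        apply Subtype.ext
        show ((π' i) ((π' i) z) : V) = (z : V)
        rw [hπ' i hi]
        by_cases hc1 : π i (z : V) = x
        · have hv : ((π' i) z : V) = π i y := by rw [hπ' i hi, if_pos hc1]
          have h1 : π i ((π' i z : V)) = y := by rw [hv, hinv2]
          have hne1 : π i ((π' i z : V)) ≠ x := by rw [h1]; exact Ne.symm hxyne
          rw [if_neg hne1, if_pos h1]
          exact (π i).injective (by rw [hinv2]; exact hc1.symm)
        · by_cases hc2 : π i (z : V) = y
          · have hv : ((π' i) z : V) = π i x := by rw [hπ' i hi, if_neg hc1, if_pos hc2]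
            have h1 : π i ((π' i z : V)) = x := by rw [hv, hinv2]
            rw [if_pos h1]
            exact (π i).injective (by rw [hinv2]; exact hc2.symm)
          · have hv : ((π' i) z : V) = π i (z : V) := by
              rw [hπ' i hi, if_neg hc1, if_neg hc2]
            have h1 : π i ((π' i z : V)) = (z : V) := by rw [hv, hinv2]
            have hne1 : π i ((π' i z : V)) ≠ x := by rw [h1]; exact z.2.1
            have hne2 : π i ((π' i z : V)) ≠ y := by rw [h1]; exact z.2.2
            rw [if_neg hne1, if_neg hne2]
            exact h1
      · intro z h
        have hval := congrArg Subtype.val h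
        rw [hπ' i hi] at hval
        by_cases hc1 : π i (z : V) = x
        · rw [if_pos hc1] at hval
          have h2 : y = x := by rw [← hc1, ← hval, hinv2]
          exact hxyne h2.symm
        · by_cases hc2 : π i (z : V) = y
          · rw [if_neg hc1, if_pos hc2] at hval
            have h2 : x = y := by rw [← hc2, ← hval, hinv2]
            exact hxyne h2
          · rw [if_neg hc1, if_neg hc2] at hval
            exact hfpf i (z : V) hval
  · -- case j ∉ {a, b}
    intro a b hab haj hbj
    have hsub : Subgroup.closure {π a, π b} ≤ Subgroup.closure (π '' {i : Fin 5 | i ≠ j}) := by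
      rw [Subgroup.closure_le]
      intro s hs
      rcases hs with rfl | hs
      · exact hmem a haj
      · rw [Set.mem_singleton_iff] at hs
        subst hs
        exact hmem b hbj
    have hnot : y ∉ MulAction.orbit (Subgroup.closure {π a, π b}) x := by
      rintro ⟨g, hg⟩
      exact hdip ⟨⟨(g : Equiv.Perm V), hsub g.2⟩, hg⟩
    simp only [numOrbits]
    exact count_case_ab (π a) (π b) (hinv2 a) (hinv2 b) (hfpf a) (hfpf b) x y hxyne hnot
      (π' a) (π' b) (hπ' a haj) (hπ' b hbj)
  · -- case pair (j, a)
    intro a ha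
    simp only [numOrbits]
    exact count_case_ja (π j) (π a) (hinv2 j) (hinv2 a) (hfpf j) (hfpf a) x y hxyne hxy
      (hax a ha) (hay a ha) (π' j) (π' a) hπ'j (hπ' a ha)
end

section
/- Let (π_0,…,π_4) encode a regular 5-colored graph on V with |V| = 2p, and let x, y ∈ V with π_j(x) = y form a 1-dipole of color j, i.e. x and y lie in distinct orbits of the subgroup generated by {π_i : i ≠ j}. Let (π'_0,…,π'_4) on V' = V \ {x,y} be the graph obtained by cancelling the dipole (for i ≠ j, π'_i(z) = π_i(y) if π_i(z) = x, π'_i(z) = π_i(x) if π_i(z) = y, and π'_i(z) = π_i(z) otherwise; π'_j is the restriction of π_j). Then |V'| = 2(p−1) and for every bijection ε : ZMod 5 → {0,1,2,3,4} the regular genus is preserved: ρ_ε(π'_0,…,π'_4) = ρ_ε(π_0,…,π_4). -/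
open Relation

namespace DPAux

variable {V : Type*}

def Stp (σ τ : Equiv.Perm V) (z w : V) : Prop := σ z = w ∨ τ z = w
def Chn (σ τ : Equiv.Perm V) (D : Set V) : V → V → Prop :=
  Relation.ReflTransGen (fun z w => Stp σ τ z w ∧ z ∉ D ∧ w ∉ D)

theorem nmem_pair {x y z : V} : z ∉ ({x, y} : Set V) ↔ z ≠ x ∧ z ≠ y := by
  simp [not_or]

variable {σ τ : Equiv.Perm V}

theorem stp_symm (hσ : ∀ z, σ (σ z) = z) (hτ : ∀ z, τ (τ z) = z) :
    ∀ {z w}, Stp σ τ z w → Stp σ τ w z := by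
  rintro z w (rfl | rfl)
  · exact Or.inl (hσ z)
  · exact Or.inr (hτ z)

theorem rtg_symm (hσ : ∀ z, σ (σ z) = z) (hτ : ∀ z, τ (τ z) = z) {z w : V}
    (h : ReflTransGen (Stp σ τ) z w) : ReflTransGen (Stp σ τ) w z := by
  induction h with
  | refl => exact .refl
  | tail _ hst ih => exact .trans (.single (stp_symm hσ hτ hst)) ih

theorem eqvGen_iff_rtg (hσ : ∀ z, σ (σ z) = z) (hτ : ∀ z, τ (τ z) = z) {z w : V} :
    EqvGen (Stp σ τ) z w ↔ ReflTransGen (Stp σ τ) z w := by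
  constructor
  · intro h
    induction h with
    | rel a b hab => exact .single hab
    | refl a => exact .refl
    | symm a b _ ih => exact rtg_symm hσ hτ ih
    | trans a b c _ _ ih1 ih2 => exact ih1.trans ih2
  · intro h
    induction h with
    | refl => exact .refl _
    | tail _ hst ih => exact ih.trans _ _ _ (.rel _ _ hst)

theorem chn_mono {D : Set V} {z w : V} (h : Chn σ τ D z w) : ReflTransGen (Stp σ τ) z w := by
  induction h with
  | refl => exact .refl
  | tail _ hst ih => exact ih.tail hst.1

theorem chn_eqvGen {D : Set V} {z w : V} (h : Chn σ τ D z w) : EqvGen (Stp σ τ) z w := by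
  induction h with
  | refl => exact .refl _
  | tail _ hst ih => exact ih.trans _ _ _ (.rel _ _ hst.1)

/-- walk decomposition: anything reachable from `z` and outside `D` is `D`-avoiding reachable
from `z` itself or from a neighbour of `D`. -/
theorem walk (D : Set V) {z w : V} (h : ReflTransGen (Stp σ τ) z w) (hw : w ∉ D) :
    ∃ u, (u = z ∨ ∃ d ∈ D, Stp σ τ d u) ∧ u ∉ D ∧ Chn σ τ D u w := by
  induction h with
  | refl => exact ⟨z, Or.inl rfl, hw, .refl⟩
  | @tail m w hzm hst ih =>
    by_cases hm : m ∈ D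
    · exact ⟨w, Or.inr ⟨m, hm, hst⟩, hw, .refl⟩
    · obtain ⟨u, h1, h2, h3⟩ := ih hm
      exact ⟨u, h1, h2, h3.tail ⟨hst, hm, hw⟩⟩

/-- if no point of `D` is reachable from `z`, reachability from `z` upgrades to `D`-avoiding. -/
theorem stay {D : Set V} {z w : V} (hD : ∀ d ∈ D, ¬ ReflTransGen (Stp σ τ) z d)
    (h : ReflTransGen (Stp σ τ) z w) : Chn σ τ D z w := by
  induction h with
  | refl => exact .refl
  | @tail m w hzm hst ih =>
    exact ih.tail ⟨hst, fun hm => hD m hm hzm, fun hw => hD w hw (hzm.tail hst)⟩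
theorem even_card_invol [DecidableEq V] (f : Equiv.Perm V) (hf : ∀ z, f (f z) = z)
    (hfp : ∀ z, f z ≠ z) (s : Finset V) (hs : ∀ z ∈ s, f z ∈ s) : Even s.card := by
  induction s using Finset.strongInduction with
  | _ s ih =>
    rcases s.eq_empty_or_nonempty with rfl | ⟨a, ha⟩
    · simp
    · have hfa : f a ∈ s := hs a ha
      have hne : f a ≠ a := hfp a
      have hsub : ({a, f a} : Finset V) ⊆ s := by
        intro z hz; simp at hz; rcases hz with rfl | rfl <;> assumption
      have hcard2 : ({a, f a} : Finset V).card = 2 := by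
        rw [Finset.card_insert_of_notMem (by simp [hne.symm]), Finset.card_singleton]
      have hss : s \ {a, f a} ⊂ s := by
        refine Finset.sdiff_ssubset (by assumption_mod_cast) ?_
        exact ⟨a, by simp⟩
      have hinv : ∀ z ∈ s \ {a, f a}, f z ∈ s \ {a, f a} := by
        intro z hz
        simp only [Finset.mem_sdiff, Finset.mem_insert, Finset.mem_singleton, not_or] at hz ⊢
        refine ⟨hs z hz.1, ?_, ?_⟩
        · intro h; exact hz.2.2 (by rw [← h, hf])
        · intro h; exact hz.2.1 (f.injective h)
      have heven := ih _ hss hinv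
      have hc : (s \ {a, f a}).card = s.card - 2 := by
        rw [Finset.card_sdiff_of_subset hsub, hcard2]
      have hle : 2 ≤ s.card := hcard2 ▸ Finset.card_le_card hsub
      rw [hc] at heven
      rw [Nat.even_iff] at heven ⊢
      omega

theorem even_ncard_invol [Fintype V] [DecidableEq V] (f : Equiv.Perm V) (hf : ∀ z, f (f z) = z)
    (hfp : ∀ z, f z ≠ z) (s : Set V) (hs : ∀ z ∈ s, f z ∈ s) : Even s.ncard := by
  classical
  have hfin : s.Finite := Set.toFinite s
  rw [Set.ncard_eq_toFinset_card _ hfin]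
  exact even_card_invol f hf hfp hfin.toFinset (by intro z hz; rw [Set.Finite.mem_toFinset] at hz ⊢; exact hs z hz)
theorem connect [Fintype V] [DecidableEq V] {σ τ : Equiv.Perm V}
    (hσ : ∀ z, σ (σ z) = z) (hτ : ∀ z, τ (τ z) = z)
    (hσf : ∀ z, σ z ≠ z) (hτf : ∀ z, τ z ≠ z) (x y : V)
    (hnr : ¬ ReflTransGen (Stp σ τ) x y) :
    Chn σ τ {x, y} (σ x) (τ x) := by
  set D : Set V := {x, y} with hD
  have hmem : ∀ z : V, z ∉ D ↔ z ≠ x ∧ z ≠ y := by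
    intro z; simp [hD, not_or]
  have hσxD : σ x ∉ D := by
    rw [hmem]
    refine ⟨hσf x, fun h => hnr (.single (Or.inl h))⟩
  have hτxD : τ x ∉ D := by
    rw [hmem]
    refine ⟨hτf x, fun h => hnr (.single (Or.inr h))⟩
  set A : Set V := {z | z ∉ D ∧ Chn σ τ D (σ x) z} with hA
  have hσxA : σ x ∈ A := ⟨hσxD, .refl⟩
  have hreach : ∀ z ∈ A, ReflTransGen (Stp σ τ) x z := by
    intro z hz
    exact (ReflTransGen.single (show Stp σ τ x (σ x) from Or.inl rfl)).trans (chn_mono hz.2)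
  have hσy : ∀ z ∈ A, σ z ≠ y := by
    intro z hz h
    exact hnr ((hreach z hz).tail (show Stp σ τ z y from Or.inl h))
  have hτy : ∀ z ∈ A, τ z ≠ y := by
    intro z hz h
    exact hnr ((hreach z hz).tail (show Stp σ τ z y from Or.inr h))
  by_contra hcon
  have hτxA : τ x ∉ A := fun h => hcon h.2
  -- B = insert x A is σ-invariant
  have hB : ∀ z ∈ insert x A, σ z ∈ insert x A := by
    rintro z (rfl | hz)
    · exact Or.inr hσxA
    · by_cases hx : σ z = x
      · exact Or.inl hx
      · have hnD : σ z ∉ D := by rw [hmem]; exact ⟨hx, hσy z hz⟩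
        exact Or.inr ⟨hnD, hz.2.tail ⟨Or.inl rfl, hz.1, hnD⟩⟩
  -- A is τ-invariant
  have hAinv : ∀ z ∈ A, τ z ∈ A := by
    intro z hz
    have hx : τ z ≠ x := by
      intro h
      have : z = τ x := by rw [← h, hτ]
      exact hτxA (this ▸ hz)
    have hnD : τ z ∉ D := by rw [hmem]; exact ⟨hx, hτy z hz⟩
    exact ⟨hnD, hz.2.tail ⟨Or.inr rfl, hz.1, hnD⟩⟩
  have h1 : Even (insert x A).ncard := even_ncard_invol σ hσ hσf _ hB
  have h2 : Even A.ncard := even_ncard_invol τ hτ hτf _ hAinv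
  have hxA : x ∉ A := fun h => h.1 (by simp [hD])
  have h3 : (insert x A).ncard = A.ncard + 1 := Set.ncard_insert_of_notMem hxA
  rw [h3, Nat.even_iff] at h1
  rw [Nat.even_iff] at h2
  omega



variable {σ τ : Equiv.Perm V}

theorem claim1 [Fintype V] [DecidableEq V]
    (hσ : ∀ z, σ (σ z) = z) (hτ : ∀ z, τ (τ z) = z)
    (hσf : ∀ z, σ z ≠ z) (hτf : ∀ z, τ z ≠ z) (x y : V)
    (hnr : ¬ ReflTransGen (Stp σ τ) x y)
    {z : V} (hz : z ∉ ({x, y} : Set V)) (h : ReflTransGen (Stp σ τ) x z) :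
    Chn σ τ {x, y} (σ x) z := by
  obtain ⟨u, hu, huD, hchn⟩ := walk {x, y} h hz
  rcases hu with rfl | ⟨d, hd, hstp⟩
  · exact absurd (by simp : u ∈ ({u, y} : Set V)) huD
  · rcases hd with rfl | rfl
    · rcases hstp with rfl | rfl
      · exact hchn
      · exact (connect hσ hτ hσf hτf d y hnr).trans hchn
    · exfalso
      have hyu : ReflTransGen (Stp σ τ) d u := .single hstp
      have hyz : ReflTransGen (Stp σ τ) d z := hyu.trans (chn_mono hchn)
      exact hnr (h.trans (rtg_symm hσ hτ hyz))

theorem claimB1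
    (hσ : ∀ z, σ (σ z) = z) (hτ : ∀ z, τ (τ z) = z)
    (hτf : ∀ z, τ z ≠ z) (x y : V) (hxy : τ x = y)
    {z : V} (hz : z ∉ ({x, y} : Set V)) (h : ReflTransGen (Stp σ τ) x z) :
    Chn σ τ {x, y} (σ x) z ∨ Chn σ τ {x, y} (σ y) z := by
  obtain ⟨u, hu, huD, hchn⟩ := walk {x, y} h hz
  rw [nmem_pair] at huD
  rcases hu with rfl | ⟨d, hd, hstp⟩
  · exact absurd rfl huD.1
  · rcases hd with rfl | rfl
    · rcases hstp with rfl | h'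
      · exact Or.inl hchn
      · exact absurd (h'.symm.trans hxy) huD.2
    · rcases hstp with rfl | h'
      · exact Or.inr hchn
      · exfalso
        apply huD.1
        rw [← h', ← hxy, hτ]

variable [DecidableEq V] {σ τ : Equiv.Perm V} {x y : V} {σ' τ' : Equiv.Perm {z : V // z ≠ x ∧ z ≠ y}}

/-- lift an avoiding chain in `V` to the subtype -/
theorem chn_lift
    (hσ' : ∀ z : {z : V // z ≠ x ∧ z ≠ y}, σ (z : V) ≠ x → σ (z : V) ≠ y →
      ((σ' z : V) = σ (z : V)))
    (hτ' : ∀ z : {z : V // z ≠ x ∧ z ≠ y}, τ (z : V) ≠ x → τ (z : V) ≠ y →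
      ((τ' z : V) = τ (z : V)))
    {u w : V} (h : Chn σ τ {x, y} u w) :
    ∀ (hu : u ≠ x ∧ u ≠ y) (hw : w ≠ x ∧ w ≠ y),
      EqvGen (Stp σ' τ') ⟨u, hu⟩ ⟨w, hw⟩ := by
  induction h with
  | refl => intro hu hw; exact EqvGen.refl _
  | @tail m w hum hst ih =>
    intro hu hw
    have hm : m ≠ x ∧ m ≠ y := nmem_pair.mp hst.2.1
    refine (ih hu hm).trans _ _ _ (EqvGen.rel _ _ ?_)
    rcases hst.1 with h' | h'
    · exact Or.inl (Subtype.ext (by rw [hσ' ⟨m, hm⟩ (h' ▸ hw.1) (h' ▸ hw.2)]; exact h'))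
    · exact Or.inr (Subtype.ext (by rw [hτ' ⟨m, hm⟩ (h' ▸ hw.1) (h' ▸ hw.2)]; exact h'))

/-- project an equivalence in the reduced graph back to `V`: either the endpoints were already
equivalent, or both lie in the union of the orbits of `x` and `y`. -/
theorem projA (hσ : ∀ z, σ (σ z) = z) (hτ : ∀ z, τ (τ z) = z)
    (hσ' : ∀ z : {z : V // z ≠ x ∧ z ≠ y},
      (σ' z : V) = if σ z = x then σ y else if σ z = y then σ x else σ z)
    (hτ' : ∀ z : {z : V // z ≠ x ∧ z ≠ y},
      (τ' z : V) = if τ z = x then τ y else if τ z = y then τ x else τ z)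
    {z w : {z : V // z ≠ x ∧ z ≠ y}} (h : EqvGen (Stp σ' τ') z w) :
    EqvGen (Stp σ τ) (z : V) (w : V) ∨
      ((EqvGen (Stp σ τ) x z ∨ EqvGen (Stp σ τ) y z) ∧
       (EqvGen (Stp σ τ) x w ∨ EqvGen (Stp σ τ) y w)) := by
  induction h with
  | rel a b hab =>
    rcases hab with h' | h'
    · rw [← h']
      have := hσ' a
      split_ifs at this with h1 h2
      · right
        constructor
        · left
          have : (a : V) = σ x := by simpa [hσ] using congrArg σ h1
          rw [this]
          exact EqvGen.rel _ _ (Or.inl rfl)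
        · right
          rw [hσ' a, if_pos h1]
          exact EqvGen.rel _ _ (Or.inl rfl)
      · right
        constructor
        · right
          have : (a : V) = σ y := by simpa [hσ] using congrArg σ h2
          rw [this]
          exact EqvGen.rel _ _ (Or.inl rfl)
        · left
          rw [hσ' a, if_neg h1, if_pos h2]
          exact EqvGen.rel _ _ (Or.inl rfl)
      · left
        rw [hσ' a, if_neg h1, if_neg h2]
        exact EqvGen.rel _ _ (Or.inl rfl)
    · rw [← h']
      have := hτ' a
      split_ifs at this with h1 h2
      · right
        refine ⟨Or.inl ?_, Or.inr ?_⟩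
        · have : (a : V) = τ x := by simpa [hτ] using congrArg τ h1
          rw [this]
          exact EqvGen.rel _ _ (Or.inr rfl)
        · rw [hτ' a, if_pos h1]
          exact EqvGen.rel _ _ (Or.inr rfl)
      · right
        refine ⟨Or.inr ?_, Or.inl ?_⟩
        · have : (a : V) = τ y := by simpa [hτ] using congrArg τ h2
          rw [this]
          exact EqvGen.rel _ _ (Or.inr rfl)
        · rw [hτ' a, if_neg h1, if_pos h2]
          exact EqvGen.rel _ _ (Or.inr rfl)
      · left
        rw [hτ' a, if_neg h1, if_neg h2]
        exact EqvGen.rel _ _ (Or.inr rfl)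
  | refl a => exact Or.inl (EqvGen.refl _)
  | symm a b _ ih =>
    rcases ih with h | ⟨h1, h2⟩
    · exact Or.inl (h.symm _ _)
    · exact Or.inr ⟨h2, h1⟩
  | trans a b c _ _ ih1 ih2 =>
    rcases ih1 with h1 | ⟨ha, hb⟩ <;> rcases ih2 with h2 | ⟨hb', hc⟩
    · exact Or.inl (h1.trans _ _ _ h2)
    · refine Or.inr ⟨?_, hc⟩
      rcases hb' with hb' | hb'
      · exact Or.inl (hb'.trans _ _ _ (h1.symm _ _))
      · exact Or.inr (hb'.trans _ _ _ (h1.symm _ _))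
    · refine Or.inr ⟨ha, ?_⟩
      rcases hb with hb | hb
      · exact Or.inl (hb.trans _ _ _ h2)
      · exact Or.inr (hb.trans _ _ _ h2)
    · exact Or.inr ⟨ha, hc⟩

theorem projB (hσ : ∀ z, σ (σ z) = z) (hxy : τ x = y)
    (hσ' : ∀ z : {z : V // z ≠ x ∧ z ≠ y},
      (σ' z : V) = if σ z = x then σ y else if σ z = y then σ x else σ z)
    (hτ' : ∀ z : {z : V // z ≠ x ∧ z ≠ y}, (τ' z : V) = τ z)
    {z w : {z : V // z ≠ x ∧ z ≠ y}} (h : EqvGen (Stp σ' τ') z w) :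
    EqvGen (Stp σ τ) (z : V) (w : V) := by
  have hxyR : EqvGen (Stp σ τ) x y := EqvGen.rel _ _ (Or.inr hxy)
  induction h with
  | rel a b hab =>
    rcases hab with h' | h'
    · rw [← h']
      have := hσ' a
      split_ifs at this with h1 h2
      · have ha : (a : V) = σ x := by simpa [hσ] using congrArg σ h1
        rw [hσ' a, if_pos h1, ha]
        refine ((EqvGen.rel x (σ x) (Or.inl rfl)).symm _ _).trans _ _ _ ?_
        exact hxyR.trans _ _ _ (EqvGen.rel _ _ (Or.inl rfl))
      · have ha : (a : V) = σ y := by simpa [hσ] using congrArg σ h2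
        rw [hσ' a, if_neg h1, if_pos h2, ha]
        refine ((EqvGen.rel y (σ y) (Or.inl rfl)).symm _ _).trans _ _ _ ?_
        exact (hxyR.symm _ _).trans _ _ _ (EqvGen.rel _ _ (Or.inl rfl))
      · rw [hσ' a, if_neg h1, if_neg h2]
        exact EqvGen.rel _ _ (Or.inl rfl)
    · rw [← h', hτ' a]
      exact EqvGen.rel _ _ (Or.inr rfl)
  | refl a => exact EqvGen.refl _
  | symm a b _ ih => exact ih.symm _ _
  | trans a b c _ _ ih1 ih2 => exact ih1.trans _ _ _ ih2
theorem orbit_pair_iff (σ τ : Equiv.Perm V) (z w : V) :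
    z ∈ MulAction.orbit (Subgroup.closure ({σ, τ} : Set (Equiv.Perm V))) w
      ↔ EqvGen (Stp σ τ) z w := by
  constructor
  · rintro ⟨⟨u, hu⟩, rfl⟩
    show EqvGen (Stp σ τ) (u • w) w
    have key : ∀ u ∈ Subgroup.closure ({σ, τ} : Set (Equiv.Perm V)),
        ∀ v : V, EqvGen (Stp σ τ) v (u v) := by
      intro u hu
      induction hu using Subgroup.closure_induction with
      | mem s hs =>
        intro v
        rcases hs with rfl | rfl
        · exact EqvGen.rel _ _ (Or.inl rfl)
        · exact EqvGen.rel _ _ (Or.inr rfl)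
      | one => intro v; exact EqvGen.refl v
      | mul a b ha hb iha ihb =>
        intro v
        exact (ihb v).trans _ _ _ (by simpa using iha (b v))
      | inv a ha iha =>
        intro v
        have := iha ((a⁻¹ : Equiv.Perm V) v)
        rw [← Equiv.Perm.mul_apply, mul_inv_cancel, Equiv.Perm.one_apply] at this
        exact (this.symm _ _)
    exact ((key u hu w).symm _ _)
  · intro h
    induction h with
    | rel a b hab =>
      rcases hab with h | h
      · exact ⟨⟨σ⁻¹, inv_mem (Subgroup.subset_closure (by simp))⟩, by
          simp [← h, Equiv.Perm.smul_def]⟩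
      · exact ⟨⟨τ⁻¹, inv_mem (Subgroup.subset_closure (by simp))⟩, by
          simp [← h, Equiv.Perm.smul_def]⟩
    | refl a => exact MulAction.mem_orbit_self a
    | symm a b _ ih =>
      rw [MulAction.orbit_eq_iff.mpr ih]; exact MulAction.mem_orbit_self _
    | trans a b c _ _ ih1 ih2 =>
      rw [← MulAction.orbit_eq_iff.mpr ih2]; exact ih1

theorem orbitRel_eq (σ τ : Equiv.Perm V) :
    MulAction.orbitRel (Subgroup.closure {σ, τ} : Subgroup (Equiv.Perm V)) V
      = EqvGen.setoid (Stp σ τ) := by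
  ext z w
  exact orbit_pair_iff σ τ z w


theorem lemA [Fintype V] [DecidableEq V] {σ τ : Equiv.Perm V}
    (hσ : ∀ z, σ (σ z) = z) (hτ : ∀ z, τ (τ z) = z)
    (hσf : ∀ z, σ z ≠ z) (hτf : ∀ z, τ z ≠ z) {x y : V}
    (hnr : ¬ EqvGen (Stp σ τ) x y)
    {σ' τ' : Equiv.Perm {z : V // z ≠ x ∧ z ≠ y}}
    (hσ' : ∀ z : {z : V // z ≠ x ∧ z ≠ y},
      (σ' z : V) = if σ z = x then σ y else if σ z = y then σ x else σ z)
    (hτ' : ∀ z : {z : V // z ≠ x ∧ z ≠ y},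
      (τ' z : V) = if τ z = x then τ y else if τ z = y then τ x else τ z) :
    Nat.card (Quotient (EqvGen.setoid (Stp σ τ)))
      = Nat.card (Quotient (EqvGen.setoid (Stp σ' τ'))) + 1 := by
  classical
  have hRsymm : ∀ {a b : V}, EqvGen (Stp σ τ) a b → EqvGen (Stp σ τ) b a :=
    fun h => h.symm _ _
  have hRtrans : ∀ {a b c : V}, EqvGen (Stp σ τ) a b → EqvGen (Stp σ τ) b c →
      EqvGen (Stp σ τ) a c := fun h1 h2 => h1.trans _ _ _ h2
  have hiff : ∀ {a b : V}, EqvGen (Stp σ τ) a b ↔ ReflTransGen (Stp σ τ) a b :=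
    eqvGen_iff_rtg hσ hτ
  have hnr' : ¬ ReflTransGen (Stp σ τ) x y := fun h => hnr (hiff.mpr h)
  have pσx1 : σ x ≠ x := hσf x
  have pσx2 : σ x ≠ y := fun h => hnr (EqvGen.rel _ _ (Or.inl h))
  have pσy1 : σ y ≠ y := hσf y
  have pσy2 : σ y ≠ x := fun h => hnr (hRsymm (EqvGen.rel _ _ (Or.inl h)))
  let exx : {z : V // z ≠ x ∧ z ≠ y} := ⟨σ x, pσx1, pσx2⟩
  let eyy : {z : V // z ≠ x ∧ z ≠ y} := ⟨σ y, pσy2, pσy1⟩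
  have hR'symm : ∀ {a b : {z : V // z ≠ x ∧ z ≠ y}}, EqvGen (Stp σ' τ') a b →
      EqvGen (Stp σ' τ') b a := fun h => h.symm _ _
  have hR'trans : ∀ {a b c : {z : V // z ≠ x ∧ z ≠ y}}, EqvGen (Stp σ' τ') a b →
      EqvGen (Stp σ' τ') b c → EqvGen (Stp σ' τ') a c := fun h1 h2 => h1.trans _ _ _ h2
  have hagreeσ : ∀ z : {z : V // z ≠ x ∧ z ≠ y}, σ (z : V) ≠ x → σ (z : V) ≠ y →
      ((σ' z : V) = σ (z : V)) := fun z h1 h2 => by rw [hσ' z, if_neg h1, if_neg h2]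
  have hagreeτ : ∀ z : {z : V // z ≠ x ∧ z ≠ y}, τ (z : V) ≠ x → τ (z : V) ≠ y →
      ((τ' z : V) = τ (z : V)) := fun z h1 h2 => by rw [hτ' z, if_neg h1, if_neg h2]
  have splice : EqvGen (Stp σ' τ') exx eyy := by
    refine EqvGen.rel _ _ (Or.inl ?_)
    apply Subtype.ext
    rw [hσ' exx]
    show (if σ (σ x) = x then σ y else _) = (eyy : V)
    rw [if_pos (hσ x)]
  have CA1 : ∀ (z : V) (h1 : z ≠ x) (h2 : z ≠ y), EqvGen (Stp σ τ) x z →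
      EqvGen (Stp σ' τ') exx ⟨z, h1, h2⟩ := by
    intro z h1 h2 hz
    exact chn_lift hagreeσ hagreeτ
      (claim1 hσ hτ hσf hτf x y hnr' (nmem_pair.mpr ⟨h1, h2⟩) (hiff.mp hz))
      ⟨pσx1, pσx2⟩ ⟨h1, h2⟩
  have CA2 : ∀ (z : V) (h1 : z ≠ x) (h2 : z ≠ y), EqvGen (Stp σ τ) y z →
      EqvGen (Stp σ' τ') eyy ⟨z, h1, h2⟩ := by
    intro z h1 h2 hz
    have hnr2 : ¬ ReflTransGen (Stp σ τ) y x := fun h => hnr' (rtg_symm hσ hτ h)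
    have hcl := claim1 hσ hτ hσf hτf y x hnr2
      (by rw [Set.pair_comm]; exact nmem_pair.mpr ⟨h1, h2⟩) (hiff.mp hz)
    rw [Set.pair_comm y x] at hcl
    exact chn_lift hagreeσ hagreeτ hcl ⟨pσy2, pσy1⟩ ⟨h1, h2⟩
  have stayA : ∀ (z w : V) (hz1 : z ≠ x) (hz2 : z ≠ y) (hw1 : w ≠ x) (hw2 : w ≠ y),
      ¬ EqvGen (Stp σ τ) x z → ¬ EqvGen (Stp σ τ) y z → EqvGen (Stp σ τ) z w →
      EqvGen (Stp σ' τ') ⟨z, hz1, hz2⟩ ⟨w, hw1, hw2⟩ := by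
    intro z w hz1 hz2 hw1 hw2 hx hy hzw
    have hD : ∀ d ∈ ({x, y} : Set V), ¬ ReflTransGen (Stp σ τ) z d := by
      intro d hd
      simp only [Set.mem_insert_iff, Set.mem_singleton_iff] at hd
      rcases hd with rfl | rfl
      · exact fun h => hx (hRsymm (hiff.mpr h))
      · exact fun h => hy (hRsymm (hiff.mpr h))
    exact chn_lift hagreeσ hagreeτ (stay hD (hiff.mp hzw)) ⟨hz1, hz2⟩ ⟨hw1, hw2⟩
  -- representative map
  let rep : V → {z : V // z ≠ x ∧ z ≠ y} := fun z =>
    if hz : z ≠ x ∧ z ≠ y then ⟨z, hz⟩ else exx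
  have hrep_eq : ∀ (z : V) (h1 : z ≠ x) (h2 : z ≠ y), rep z = ⟨z, h1, h2⟩ :=
    fun z h1 h2 => dif_pos ⟨h1, h2⟩
  have hrep_x : rep x = exx := dif_neg (fun h => h.1 rfl)
  have hrel : ∀ z : V, ¬ EqvGen (Stp σ τ) z y → EqvGen (Stp σ τ) z (rep z : V) := by
    intro z hzy
    by_cases hzx : z = x
    · subst hzx
      rw [hrep_x]
      exact EqvGen.rel _ _ (Or.inl rfl)
    · have hzy' : z ≠ y := fun h => hzy (h ▸ EqvGen.refl _)
      rw [hrep_eq z hzx hzy']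
      exact EqvGen.refl _
  have hkey : ∀ z : V, ¬ EqvGen (Stp σ τ) z y → EqvGen (Stp σ τ) x z →
      EqvGen (Stp σ' τ') (rep z) exx := by
    intro z hzy hxz
    by_cases hzx : z = x
    · subst hzx
      rw [hrep_x]
      exact EqvGen.refl _
    · have hzy' : z ≠ y := fun h => hzy (h ▸ EqvGen.refl _)
      rw [hrep_eq z hzx hzy']
      exact hR'symm (CA1 z hzx hzy' hxz)
  -- the lifted map
  obtain ⟨φ, hφ1, hφ2⟩ : ∃ φ : V → Option (Quotient (EqvGen.setoid (Stp σ' τ'))),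
      (∀ z, EqvGen (Stp σ τ) z y → φ z = none) ∧
      (∀ z, ¬ EqvGen (Stp σ τ) z y →
        φ z = some (Quotient.mk (EqvGen.setoid (Stp σ' τ')) (rep z))) :=
    ⟨fun z => if h : EqvGen (Stp σ τ) z y then none
      else some (Quotient.mk (EqvGen.setoid (Stp σ' τ')) (rep z)),
      fun z h => dif_pos h, fun z h => dif_neg h⟩
  have hwd : ∀ (a b : V), EqvGen (Stp σ τ) a b → φ a = φ b := by
    intro a b hab
    by_cases hay : EqvGen (Stp σ τ) a y
    · rw [hφ1 a hay, hφ1 b (hRtrans (hRsymm hab) hay)]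
    · have hby : ¬ EqvGen (Stp σ τ) b y := fun h => hay (hRtrans hab h)
      rw [hφ2 a hay, hφ2 b hby]
      congr 1
      apply Quotient.sound
      show EqvGen (Stp σ' τ') (rep a) (rep b)
      by_cases hax : EqvGen (Stp σ τ) x a
      · exact hR'trans (hkey a hay hax) (hR'symm (hkey b hby (hRtrans hax hab)))
      · have hbx : ¬ EqvGen (Stp σ τ) x b := fun h => hax (hRtrans h (hRsymm hab))
        have ha1 : a ≠ x := fun h => hax (by rw [h]; exact EqvGen.refl x)
        have ha2 : a ≠ y := fun h => hay (by rw [h]; exact EqvGen.refl y)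
        have hb1 : b ≠ x := fun h => hbx (by rw [h]; exact EqvGen.refl x)
        have hb2 : b ≠ y := fun h => hby (by rw [h]; exact EqvGen.refl y)
        rw [hrep_eq a ha1 ha2, hrep_eq b hb1 hb2]
        exact stayA a b ha1 ha2 hb1 hb2 hax
          (fun h => hay (hRsymm h)) hab
  have hbij : Function.Bijective
      (Quotient.lift φ hwd : Quotient (EqvGen.setoid (Stp σ τ)) →
        Option (Quotient (EqvGen.setoid (Stp σ' τ')))) := by
    constructor
    · intro q1 q2
      induction q1 using Quotient.ind with
      | _ a =>
      induction q2 using Quotient.ind with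
      | _ b =>
      intro h
      have h2 : φ a = φ b := h
      apply Quotient.sound
      by_cases hay : EqvGen (Stp σ τ) a y <;> by_cases hby : EqvGen (Stp σ τ) b y
      · exact hRtrans hay (hRsymm hby)
      · rw [hφ1 a hay, hφ2 b hby] at h2
        exact absurd h2 (by simp)
      · rw [hφ2 a hay, hφ1 b hby] at h2
        exact absurd h2 (by simp)
      · rw [hφ2 a hay, hφ2 b hby] at h2
        have h3 : EqvGen (Stp σ' τ') (rep a) (rep b) :=
          Quotient.exact (Option.some_injective _ h2)
        have ha1 : a ≠ y := fun h => hay (by rw [h]; exact EqvGen.refl y)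
        have hb1 : b ≠ y := fun h => hby (by rw [h]; exact EqvGen.refl y)
        rcases projA hσ hτ hσ' hτ' h3 with h4 | ⟨h4, h5⟩
        · -- directly related
          exact hRtrans (hrel a hay) (hRtrans h4 (hRsymm (hrel b hby)))
        · -- both in the union of the two orbits; the `y` side is impossible
          have hxa : EqvGen (Stp σ τ) x a := by
            rcases h4 with h4 | h4
            · exact hRtrans h4 (hRsymm (hrel a hay))
            · exact absurd (hRsymm (hRtrans h4 (hRsymm (hrel a hay)))) hay
          have hxb : EqvGen (Stp σ τ) x b := by
            rcases h5 with h5 | h5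
            · exact hRtrans h5 (hRsymm (hrel b hby))
            · exact absurd (hRsymm (hRtrans h5 (hRsymm (hrel b hby)))) hby
          exact hRtrans (hRsymm hxa) hxb
    · intro o
      rcases o with _ | q'
      · refine ⟨Quotient.mk _ y, ?_⟩
        show φ y = none
        exact hφ1 y (EqvGen.refl y)
      · induction q' using Quotient.ind with
        | _ w =>
        obtain ⟨w0, hw1, hw2⟩ := w
        by_cases hwy : EqvGen (Stp σ τ) w0 y
        · refine ⟨Quotient.mk _ x, ?_⟩
          show φ x = _
          rw [hφ2 x hnr, hrep_x]
          congr 1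
          apply Quotient.sound
          show EqvGen (Stp σ' τ') exx ⟨w0, hw1, hw2⟩
          exact hR'trans splice (CA2 w0 hw1 hw2 (hRsymm hwy))
        · refine ⟨Quotient.mk _ w0, ?_⟩
          show φ w0 = _
          rw [hφ2 w0 hwy, hrep_eq w0 hw1 hw2]
  calc Nat.card (Quotient (EqvGen.setoid (Stp σ τ)))
      = Nat.card (Option (Quotient (EqvGen.setoid (Stp σ' τ')))) :=
        Nat.card_congr (Equiv.ofBijective _ hbij)
    _ = Nat.card (Quotient (EqvGen.setoid (Stp σ' τ'))) + 1 := Finite.card_option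



theorem lemB [Fintype V] [DecidableEq V] {σ τ : Equiv.Perm V}
    (hσ : ∀ z, σ (σ z) = z) (hτ : ∀ z, τ (τ z) = z)
    (hσf : ∀ z, σ z ≠ z) (hτf : ∀ z, τ z ≠ z) {x y : V}
    (hxy : τ x = y) (hne : σ x ≠ y)
    {σ' τ' : Equiv.Perm {z : V // z ≠ x ∧ z ≠ y}}
    (hσ' : ∀ z : {z : V // z ≠ x ∧ z ≠ y},
      (σ' z : V) = if σ z = x then σ y else if σ z = y then σ x else σ z)
    (hτ' : ∀ z : {z : V // z ≠ x ∧ z ≠ y}, (τ' z : V) = τ z) :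
    Nat.card (Quotient (EqvGen.setoid (Stp σ τ)))
      = Nat.card (Quotient (EqvGen.setoid (Stp σ' τ'))) := by
  classical
  have hRsymm : ∀ {a b : V}, EqvGen (Stp σ τ) a b → EqvGen (Stp σ τ) b a :=
    fun h => h.symm _ _
  have hRtrans : ∀ {a b c : V}, EqvGen (Stp σ τ) a b → EqvGen (Stp σ τ) b c →
      EqvGen (Stp σ τ) a c := fun h1 h2 => h1.trans _ _ _ h2
  have hiff : ∀ {a b : V}, EqvGen (Stp σ τ) a b ↔ ReflTransGen (Stp σ τ) a b :=
    eqvGen_iff_rtg hσ hτ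
  have hxyR : EqvGen (Stp σ τ) x y := EqvGen.rel _ _ (Or.inr hxy)
  have hxny : x ≠ y := fun h => hτf x (h ▸ hxy)
  have pσx1 : σ x ≠ x := hσf x
  have pσy1 : σ y ≠ y := hσf y
  have pσy2 : σ y ≠ x := fun h => hne (by rw [← h, hσ])
  let exx : {z : V // z ≠ x ∧ z ≠ y} := ⟨σ x, pσx1, hne⟩
  let eyy : {z : V // z ≠ x ∧ z ≠ y} := ⟨σ y, pσy2, pσy1⟩
  have hR'symm : ∀ {a b : {z : V // z ≠ x ∧ z ≠ y}}, EqvGen (Stp σ' τ') a b →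
      EqvGen (Stp σ' τ') b a := fun h => h.symm _ _
  have hR'trans : ∀ {a b c : {z : V // z ≠ x ∧ z ≠ y}}, EqvGen (Stp σ' τ') a b →
      EqvGen (Stp σ' τ') b c → EqvGen (Stp σ' τ') a c := fun h1 h2 => h1.trans _ _ _ h2
  have hagreeσ : ∀ z : {z : V // z ≠ x ∧ z ≠ y}, σ (z : V) ≠ x → σ (z : V) ≠ y →
      ((σ' z : V) = σ (z : V)) := fun z h1 h2 => by rw [hσ' z, if_neg h1, if_neg h2]
  have hagreeτ : ∀ z : {z : V // z ≠ x ∧ z ≠ y}, τ (z : V) ≠ x → τ (z : V) ≠ y →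
      ((τ' z : V) = τ (z : V)) := fun z _ _ => hτ' z
  have splice : EqvGen (Stp σ' τ') exx eyy := by
    refine EqvGen.rel _ _ (Or.inl ?_)
    apply Subtype.ext
    rw [hσ' exx]
    show (if σ (σ x) = x then σ y else _) = (eyy : V)
    rw [if_pos (hσ x)]
  have CB1 : ∀ (z : V) (h1 : z ≠ x) (h2 : z ≠ y), EqvGen (Stp σ τ) x z →
      EqvGen (Stp σ' τ') exx ⟨z, h1, h2⟩ := by
    intro z h1 h2 hz
    rcases claimB1 hσ hτ hτf x y hxy (nmem_pair.mpr ⟨h1, h2⟩) (hiff.mp hz) with hc | hc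
    · exact chn_lift hagreeσ hagreeτ hc ⟨pσx1, hne⟩ ⟨h1, h2⟩
    · exact hR'trans splice (chn_lift hagreeσ hagreeτ hc ⟨pσy2, pσy1⟩ ⟨h1, h2⟩)
  let rep : V → {z : V // z ≠ x ∧ z ≠ y} := fun z =>
    if hz : z ≠ x ∧ z ≠ y then ⟨z, hz⟩ else exx
  have hrep_eq : ∀ (z : V) (h1 : z ≠ x) (h2 : z ≠ y), rep z = ⟨z, h1, h2⟩ :=
    fun z h1 h2 => dif_pos ⟨h1, h2⟩
  have hrep_x : rep x = exx := dif_neg (fun h => h.1 rfl)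
  have hrep_y : rep y = exx := dif_neg (fun h => h.2 rfl)
  have hrel : ∀ z : V, EqvGen (Stp σ τ) z (rep z : V) := by
    intro z
    by_cases h1 : z = x
    · subst h1; rw [hrep_x]; exact EqvGen.rel _ _ (Or.inl rfl)
    · by_cases h2 : z = y
      · subst h2
        rw [hrep_y]
        exact hRtrans (hRsymm hxyR) (EqvGen.rel _ _ (Or.inl rfl))
      · rw [hrep_eq z h1 h2]; exact EqvGen.refl _
  have hkey : ∀ z : V, EqvGen (Stp σ τ) x z → EqvGen (Stp σ' τ') (rep z) exx := by
    intro z hxz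
    by_cases h1 : z = x
    · subst h1; rw [hrep_x]; exact EqvGen.refl _
    · by_cases h2 : z = y
      · subst h2; rw [hrep_y]; exact EqvGen.refl _
      · rw [hrep_eq z h1 h2]
        exact hR'symm (CB1 z h1 h2 hxz)
  have hwd : ∀ (a b : V), EqvGen (Stp σ τ) a b →
      Quotient.mk (EqvGen.setoid (Stp σ' τ')) (rep a)
        = Quotient.mk (EqvGen.setoid (Stp σ' τ')) (rep b) := by
    intro a b hab
    apply Quotient.sound
    show EqvGen (Stp σ' τ') (rep a) (rep b)
    by_cases hax : EqvGen (Stp σ τ) x a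
    · exact hR'trans (hkey a hax) (hR'symm (hkey b (hRtrans hax hab)))
    · have ha1 : a ≠ x := fun h => hax (by rw [h]; exact EqvGen.refl x)
      have hay : ¬ EqvGen (Stp σ τ) a y := fun h => hax (hRsymm (hRtrans h (hRsymm hxyR)))
      have ha2 : a ≠ y := fun h => hay (by rw [h]; exact EqvGen.refl y)
      have hbx : ¬ EqvGen (Stp σ τ) x b := fun h => hax (hRtrans h (hRsymm hab))
      have hb1 : b ≠ x := fun h => hbx (by rw [h]; exact EqvGen.refl x)
      have hb2 : b ≠ y := fun h => hbx (by rw [h]; exact hxyR)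
      have hD : ∀ d ∈ ({x, y} : Set V), ¬ ReflTransGen (Stp σ τ) a d := by
        intro d hd
        simp only [Set.mem_insert_iff, Set.mem_singleton_iff] at hd
        rcases hd with rfl | rfl
        · exact fun h => hax (hRsymm (hiff.mpr h))
        · exact fun h => hay (hiff.mpr h)
      rw [hrep_eq a ha1 ha2, hrep_eq b hb1 hb2]
      exact chn_lift hagreeσ hagreeτ (stay hD (hiff.mp hab)) ⟨ha1, ha2⟩ ⟨hb1, hb2⟩
  have hbij : Function.Bijective
      (Quotient.lift (fun z => Quotient.mk (EqvGen.setoid (Stp σ' τ')) (rep z)) hwd :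
        Quotient (EqvGen.setoid (Stp σ τ)) → Quotient (EqvGen.setoid (Stp σ' τ'))) := by
    constructor
    · intro q1 q2
      induction q1 using Quotient.ind with
      | _ a =>
      induction q2 using Quotient.ind with
      | _ b =>
      intro h
      have h2 : Quotient.mk (EqvGen.setoid (Stp σ' τ')) (rep a)
          = Quotient.mk (EqvGen.setoid (Stp σ' τ')) (rep b) := h
      have h3 : EqvGen (Stp σ' τ') (rep a) (rep b) := Quotient.exact h2
      have h4 := projB hσ hxy hσ' hτ' h3
      exact Quotient.sound (hRtrans (hrel a) (hRtrans h4 (hRsymm (hrel b))))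
    · intro q'
      induction q' using Quotient.ind with
      | _ w =>
      obtain ⟨w0, hw1, hw2⟩ := w
      refine ⟨Quotient.mk _ w0, ?_⟩
      show Quotient.mk (EqvGen.setoid (Stp σ' τ')) (rep w0) = _
      rw [hrep_eq w0 hw1 hw2]
  exact Nat.card_congr (Equiv.ofBijective _ hbij)

theorem numOrbits_pair [Fintype V] (σ τ : Equiv.Perm V) :
    numOrbits {σ, τ} = Nat.card (Quotient (EqvGen.setoid (Stp σ τ))) := by
  show Nat.card (Quotient (MulAction.orbitRel (Subgroup.closure {σ, τ}) V)) = _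
  rw [orbitRel_eq]

end DPAux

open DPAux in
/-- Let `(π 0, …, π 4)` encode a regular 5-colored graph on `V` with `|V| = 2p`,
and let `x, y ∈ V` with `π j x = y` form a 1-dipole of color `j`.  Let
`(π' 0, …, π' 4)` on `V' = V \ {x, y}` be the graph obtained by cancelling the
dipole.  Then `|V'| = 2(p − 1)` and for every bijection `ε : ZMod 5 ≃ Fin 5` the
regular genus is preserved: `ρ_ε(π') = ρ_ε(π)`. -/
theorem dipole_cancellation_preserves_regularGenus
    {V : Type*} [Fintype V] [DecidableEq V]
    (π : Fin 5 → Equiv.Perm V) (p : ℕ)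
    (hcard : Fintype.card V = 2 * p)
    (hinv : ∀ j, π j * π j = 1)
    (hfpf : ∀ j x, π j x ≠ x)
    (j : Fin 5) (x y : V) (hxy : π j x = y)
    (hdip : y ∉ MulAction.orbit
      (Subgroup.closure (π '' {i : Fin 5 | i ≠ j})) x)
    (π' : Fin 5 → Equiv.Perm {z : V // z ≠ x ∧ z ≠ y})
    (hπ'j : ∀ z : {z : V // z ≠ x ∧ z ≠ y}, ((π' j) z : V) = π j z)
    (hπ' : ∀ i : Fin 5, i ≠ j → ∀ z : {z : V // z ≠ x ∧ z ≠ y},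
      ((π' i) z : V) = if π i z = x then π i y else if π i z = y then π i x
        else π i z)
    (g g' : Fin 5 → Fin 5 → ℕ)
    (hg : ∀ a b, g a b = numOrbits {π a, π b})
    (hg' : ∀ a b, g' a b = numOrbits {π' a, π' b})
    (ρ ρ' : (ZMod 5 → Fin 5) → ℚ)
    (hρ : ∀ f : ZMod 5 → Fin 5,
      2 - 2 * ρ f = (∑ i : ZMod 5, (g (f i) (f (i + 1)) : ℚ)) - 3 * (p : ℚ))
    (hρ' : ∀ f : ZMod 5 → Fin 5,
      2 - 2 * ρ' f = (∑ i : ZMod 5, (g' (f i) (f (i + 1)) : ℚ))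
        - 3 * ((p : ℚ) - 1)) :
    Fintype.card {z : V // z ≠ x ∧ z ≠ y} = 2 * (p - 1) ∧
    ∀ ε : ZMod 5 ≃ Fin 5, ρ' ⇑ε = ρ ⇑ε := by
  classical
  have hinv' : ∀ (i : Fin 5) (z : V), π i (π i z) = z := by
    intro i z
    have h := congrArg (fun e : Equiv.Perm V => e z) (hinv i)
    simpa [Equiv.Perm.mul_apply] using h
  have hxny : x ≠ y := fun h => hfpf j x (hxy.trans h.symm)
  -- cardinality of the reduced vertex set
  have hp1 : 1 ≤ p := by
    have h0 : 0 < Fintype.card V := Fintype.card_pos_iff.mpr ⟨x⟩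
    omega
  have hcardV' : Fintype.card {z : V // z ≠ x ∧ z ≠ y} = 2 * (p - 1) := by
    have e : ∀ z : V, (z ≠ x ∧ z ≠ y) ↔ ¬ (z = x ∨ z = y) := fun z => (not_or).symm
    have h1 : Fintype.card {z : V // z ≠ x ∧ z ≠ y}
        = Fintype.card {z : V // ¬ (z = x ∨ z = y)} :=
      Fintype.card_congr (Equiv.subtypeEquivRight e)
    have h2 : Fintype.card {z : V // z = x ∨ z = y} = 2 := by
      rw [Fintype.card_subtype]
      have : Finset.univ.filter (fun z : V => z = x ∨ z = y) = {x, y} := by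
        ext z; simp
      rw [this, Finset.card_pair hxny]
    rw [h1, Fintype.card_subtype_compl, h2, hcard]
    omega
  refine ⟨hcardV', ?_⟩
  -- orbit facts
  have horb : ∀ a b : Fin 5, a ≠ j → b ≠ j → ¬ EqvGen (Stp (π a) (π b)) x y := by
    intro a b ha hb hE
    apply hdip
    have hy : y ∈ MulAction.orbit
        (Subgroup.closure ({π a, π b} : Set (Equiv.Perm V))) x :=
      (orbit_pair_iff (π a) (π b) y x).mpr (hE.symm _ _)
    obtain ⟨⟨u, hu⟩, hux⟩ := hy
    have hsub : ({π a, π b} : Set (Equiv.Perm V)) ⊆ π '' {i : Fin 5 | i ≠ j} := by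
      rintro s (rfl | rfl)
      · exact ⟨a, ha, rfl⟩
      · exact ⟨b, hb, rfl⟩
    exact ⟨⟨u, Subgroup.closure_mono hsub hu⟩, hux⟩
  have hnex : ∀ c : Fin 5, c ≠ j → π c x ≠ y := by
    intro c hc h
    exact hdip ⟨⟨π c, Subgroup.subset_closure ⟨c, hc, rfl⟩⟩, h⟩
  -- the three numerical relations between g and g'
  have hAB : ∀ a b : Fin 5, a ≠ j → b ≠ j → g a b = g' a b + 1 := by
    intro a b ha hb
    rw [hg, hg', numOrbits_pair, numOrbits_pair]
    exact lemA (hinv' a) (hinv' b) (hfpf a) (hfpf b) (horb a b ha hb)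
      (hπ' a ha) (hπ' b hb)
  have hBj : ∀ b : Fin 5, b ≠ j → g b j = g' b j := by
    intro b hb
    rw [hg, hg', numOrbits_pair, numOrbits_pair]
    exact lemB (hinv' b) (hinv' j) (hfpf b) (hfpf j) hxy (hnex b hb)
      (hπ' b hb) hπ'j
  have hjB : ∀ b : Fin 5, b ≠ j → g j b = g' j b := by
    intro b hb
    rw [hg, hg', Set.pair_comm (π j) (π b), Set.pair_comm (π' j) (π' b)]
    rw [numOrbits_pair, numOrbits_pair]
    exact lemB (hinv' b) (hinv' j) (hfpf b) (hfpf j) hxy (hnex b hb)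
      (hπ' b hb) hπ'j
  intro ε
  have hterm : ∀ i : ZMod 5, (g (ε i) (ε (i + 1)) : ℚ)
      = (g' (ε i) (ε (i + 1)) : ℚ)
        + (if ε i = j ∨ ε (i + 1) = j then 0 else 1) := by
    intro i
    have hii : i ≠ i + 1 := by
      intro h
      have h1 : (1 : ZMod 5) = 0 := (left_eq_add (a := i)).mp h
      exact (by decide : (1 : ZMod 5) ≠ 0) h1
    by_cases h1 : ε i = j
    · have h2 : ε (i + 1) ≠ j := by
        intro h2
        exact hii (ε.injective (h1.trans h2.symm))
      rw [if_pos (Or.inl h1), h1, hjB _ h2]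
      ring
    · by_cases h2 : ε (i + 1) = j
      · rw [if_pos (Or.inr h2), h2, hBj _ h1]
        ring
      · rw [if_neg (by tauto), hAB _ _ h1 h2]
        push_cast
        ring
  have hite : (∑ i : ZMod 5, (if ε i = j ∨ ε (i + 1) = j then (0 : ℚ) else 1)) = 3 := by
    set k : ZMod 5 := ε.symm j with hk
    have hcond : ∀ i : ZMod 5, (ε i = j ∨ ε (i + 1) = j) ↔ (i = k ∨ i = k - 1) := by
      intro i
      constructor
      · rintro (h | h)
        · exact Or.inl (by rw [hk, ← h, Equiv.symm_apply_apply])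
        · refine Or.inr ?_
          have hik : i + 1 = k := by rw [hk, ← h, Equiv.symm_apply_apply]
          exact eq_sub_of_add_eq hik
      · rintro (rfl | rfl)
        · exact Or.inl (by rw [hk, Equiv.apply_symm_apply])
        · refine Or.inr ?_
          rw [sub_add_cancel, hk, Equiv.apply_symm_apply]
    have hkk : k - 1 ≠ k := by
      intro h
      have h1 : (1 : ZMod 5) = 0 := sub_eq_self.mp h
      exact (by decide : (1 : ZMod 5) ≠ 0) h1
    calc (∑ i : ZMod 5, (if ε i = j ∨ ε (i + 1) = j then (0 : ℚ) else 1))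
        = ∑ i : ZMod 5, (if ¬ (i = k ∨ i = k - 1) then (1 : ℚ) else 0) := by
          refine Finset.sum_congr rfl (fun i _ => ?_)
          by_cases h : ε i = j ∨ ε (i + 1) = j
          · rw [if_pos h, if_neg (by rw [not_not]; exact (hcond i).mp h)]
          · rw [if_neg h, if_pos (fun hc => h ((hcond i).mpr hc))]
      _ = ((Finset.univ.filter (fun i : ZMod 5 => ¬ (i = k ∨ i = k - 1))).card : ℚ) := by
          rw [Finset.sum_boole]
      _ = 3 := by
          rw [Finset.filter_not, Finset.card_sdiff_of_subset (Finset.filter_subset _ _)]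
          have hflt : Finset.univ.filter (fun i : ZMod 5 => i = k ∨ i = k - 1)
              = {k, k - 1} := by
            ext i; simp
          rw [hflt, Finset.card_pair (Ne.symm hkk), Finset.card_univ, ZMod.card]
          norm_num
  have hsum : (∑ i : ZMod 5, (g (ε i) (ε (i + 1)) : ℚ))
      = (∑ i : ZMod 5, (g' (ε i) (ε (i + 1)) : ℚ)) + 3 := by
    rw [Finset.sum_congr rfl (fun i _ => hterm i), Finset.sum_add_distrib, hite]
  have h1 := hρ ⇑ε
  have h2 := hρ' ⇑ε
  rw [hsum] at h1
  linarith
end
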